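/- arXiv:1901.05241 — 12 statements merged into one kernel-verified Lean document; each statement's English description precedes it below -/
import Mathlib

section
/- An integral domain R is a PRINC domain (every ideal generated by an idempotent pair is principal) if and only if every two-generated invertible ideal of R is principal. -/
/-- `a, b` form an idempotent pair in `R`. -/
def IsIdemPair {R : Type*} [CommRing R] (a b : R) : Prop :=
  a * (1 - a) ∈ Ideal.span {b} ∨ b * (1 - b) ∈ Ideal.span {a}

/-- A PRINC domain: every ideal generated by an idempotent pair is principal. -/
def IsPRINC (R : Type*) [CommRing R] : Prop :=
  ∀ a b : R, IsIdemPair a b → (Ideal.span {a, b}).IsPrincipal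

section Aux

variable {R : Type*} [CommRing R] [IsDomain R]

omit [IsDomain R] in
/-- If `a(1-a) = r*b` then `(a,b)(b,1-a) = (b)`. -/
lemma key_mul {a b r : R} (h : a * (1 - a) = r * b) :
    Ideal.span {a, b} * Ideal.span {b, 1 - a} = Ideal.span {b} := by
  apply le_antisymm
  · rw [Ideal.mul_le]
    intro x hx y hy
    obtain ⟨u, v, rfl⟩ := Ideal.mem_span_pair.mp hx
    obtain ⟨s, t, rfl⟩ := Ideal.mem_span_pair.mp hy
    rw [Ideal.mem_span_singleton']
    exact ⟨u * s * a + u * t * r + v * s * b + v * t * (1 - a),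
      by linear_combination (-(u * t)) * h⟩
  · rw [Ideal.span_le, Set.singleton_subset_iff]
    have h1 : a * b ∈ Ideal.span {a, b} * Ideal.span {b, 1 - a} :=
      Ideal.mul_mem_mul (Ideal.subset_span (by simp)) (Ideal.subset_span (by simp))
    have h2 : b * (1 - a) ∈ Ideal.span {a, b} * Ideal.span {b, 1 - a} :=
      Ideal.mul_mem_mul (Ideal.subset_span (by simp)) (Ideal.subset_span (by simp))
    have h3 := add_mem h1 h2
    rwa [show a * b + b * (1 - a) = b from by ring] at h3

lemma aux_case (h : ∀ a b : R, IsUnit ((Ideal.span {a, b} : Ideal R) :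
      FractionalIdeal (nonZeroDivisors R) (FractionRing R)) →
      (Ideal.span {a, b}).IsPrincipal)
    (a b : R) (hab : a * (1 - a) ∈ Ideal.span {b}) :
    (Ideal.span {a, b} : Ideal R).IsPrincipal := by
  obtain ⟨r, hr⟩ := Ideal.mem_span_singleton'.mp hab
  by_cases hb : b = 0
  · subst hb
    have hsp : (Ideal.span {a, 0} : Ideal R) = Ideal.span {a} := by
      rw [Ideal.span_pair_comm]
      exact Submodule.span_insert_zero
    rw [hsp]; exact ⟨a, rfl⟩
  · apply h
    have hkey := key_mul hr.symm
    have hco : ((Ideal.span {a, b} : Ideal R) :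
          FractionalIdeal (nonZeroDivisors R) (FractionRing R)) *
        ((Ideal.span {b, 1 - a} : Ideal R) :
          FractionalIdeal (nonZeroDivisors R) (FractionRing R)) =
        FractionalIdeal.spanSingleton (nonZeroDivisors R)
          (algebraMap R (FractionRing R) b) := by
      rw [← FractionalIdeal.coeIdeal_mul, hkey, FractionalIdeal.coeIdeal_span_singleton]
    have hb' : algebraMap R (FractionRing R) b ≠ 0 := by
      simpa using hb
    have hunit : IsUnit (FractionalIdeal.spanSingleton (nonZeroDivisors R)
        (algebraMap R (FractionRing R) b)) := by
      refine IsUnit.of_mul_eq_one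
        (FractionalIdeal.spanSingleton (nonZeroDivisors R)
          (algebraMap R (FractionRing R) b)⁻¹) ?_
      rw [FractionalIdeal.spanSingleton_mul_spanSingleton, mul_inv_cancel₀ hb',
        FractionalIdeal.spanSingleton_one]
    rw [← hco] at hunit
    exact isUnit_of_mul_isUnit_left hunit

end Aux

theorem stmt2 {R : Type*} [CommRing R] [IsDomain R] :
    IsPRINC R ↔
      ∀ a b : R, IsUnit ((Ideal.span {a, b} : Ideal R) :
          FractionalIdeal (nonZeroDivisors R) (FractionRing R)) →
        (Ideal.span {a, b}).IsPrincipal := by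
  constructor
  · intro hP a b hu
    by_cases ha : a = 0
    · subst ha
      exact ⟨b, Submodule.span_insert_zero⟩
    set K := FractionRing R
    set f := algebraMap R K with hf
    have hinj : Function.Injective f := IsFractionRing.injective R K
    obtain ⟨u, hu'⟩ := hu
    set I : Ideal R := Ideal.span {a, b} with hI
    set J : FractionalIdeal (nonZeroDivisors R) K := ↑u⁻¹ with hJ
    have hIJ : (I : FractionalIdeal (nonZeroDivisors R) K) * J = 1 := by
      rw [← hu']; exact u.mul_inv
    have h1 : (1 : K) ∈ (I : FractionalIdeal (nonZeroDivisors R) K) * J := by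
      rw [hIJ]; exact FractionalIdeal.one_mem_one _
    have hcoe : ((I : FractionalIdeal (nonZeroDivisors R) K) : Submodule R K) =
        Submodule.span R {f a, f b} := by
      rw [FractionalIdeal.coe_coeIdeal, hI, IsLocalization.coeSubmodule_span]
      congr 1
      simp [Set.image_insert_eq, hf]
    have h1' : (1 : K) ∈ Submodule.span R {f a, f b} * (J : Submodule R K) := by
      rw [← hcoe, ← FractionalIdeal.coe_mul]
      exact h1
    rw [show ({f a, f b} : Set K) = insert (f a) {f b} from rfl,
      Submodule.span_insert, Submodule.sup_mul] at h1'
    obtain ⟨xa, hxa, xb, hxb, hsum1⟩ := Submodule.mem_sup.mp h1'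
    obtain ⟨x, hxJ, hx⟩ := Submodule.mem_span_singleton_mul.mp hxa
    obtain ⟨y, hyJ, hy⟩ := Submodule.mem_span_singleton_mul.mp hxb
    -- products of elements of I with elements of J land in R
    have hmem : ∀ z : R, z ∈ I → ∀ w : K, w ∈ (J : Submodule R K) →
        ∃ e : R, f e = f z * w := by
      intro z hz w hw
      have hz' : f z ∈ (I : FractionalIdeal (nonZeroDivisors R) K) :=
        (FractionalIdeal.mem_coeIdeal _).mpr ⟨z, hz, rfl⟩
      have hw' : w ∈ J := FractionalIdeal.mem_coe.mp hw
      have := FractionalIdeal.mul_mem_mul hz' hw'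
      rw [hIJ] at this
      obtain ⟨e, he⟩ := (FractionalIdeal.mem_one_iff _).mp this
      exact ⟨e, he⟩
    have haI : a ∈ I := Ideal.subset_span (by simp)
    have hbI : b ∈ I := Ideal.subset_span (by simp)
    obtain ⟨e₁, he₁⟩ := hmem a haI x hxJ
    obtain ⟨e₂, he₂⟩ := hmem b hbI x hxJ
    obtain ⟨e₃, he₃⟩ := hmem a haI y hyJ
    obtain ⟨e₄, he₄⟩ := hmem b hbI y hyJ
    have hsum : e₁ + e₄ = 1 := by
      apply hinj
      rw [map_add, he₁, he₄, map_one, hx, hy, hsum1]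
    have he2a : e₁ * b = e₂ * a := by
      apply hinj
      rw [map_mul, map_mul, he₁, he₂]; ring
    have he3b : e₃ * b = e₄ * a := by
      apply hinj
      rw [map_mul, map_mul, he₃, he₄]; ring
    have h14 : e₁ * e₄ = e₂ * e₃ := by
      apply hinj
      rw [map_mul, map_mul, he₁, he₂, he₃, he₄]; ring
    have pair : IsIdemPair e₁ e₃ := by
      left
      rw [Ideal.mem_span_singleton']
      exact ⟨e₂, by linear_combination e₁ * hsum - h14⟩
    obtain ⟨c, hc⟩ := (hP e₁ e₃ pair)
    have hc' : Ideal.span ({e₁, e₃} : Set R) = Ideal.span {c} := hc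
    have he₁c : e₁ ∈ Ideal.span ({c} : Set R) := by
      rw [← hc']; exact Ideal.subset_span (by simp)
    have he₃c : e₃ ∈ Ideal.span ({c} : Set R) := by
      rw [← hc']; exact Ideal.subset_span (by simp)
    obtain ⟨p, hp⟩ := Ideal.mem_span_singleton'.mp he₁c
    obtain ⟨q, hq⟩ := Ideal.mem_span_singleton'.mp he₃c
    have hcc : c ∈ Ideal.span ({e₁, e₃} : Set R) := by
      rw [hc']; exact Ideal.mem_span_singleton_self c
    obtain ⟨s, t, hst⟩ := Ideal.mem_span_pair.mp hcc
    have hdI : p * a + q * b ∈ I := Ideal.mem_span_pair.mpr ⟨p, q, rfl⟩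
    have had : a = c * (p * a + q * b) := by
      linear_combination (-a) * hsum - he3b - a * hp - b * hq
    have hc0 : c ≠ 0 := fun h0 => ha (by rw [had, h0, zero_mul])
    refine ⟨p * a + q * b, ?_⟩
    apply le_antisymm
    · intro z hz
      simp only [hI] at hz
      obtain ⟨u', v', rfl⟩ := Ideal.mem_span_pair.mp hz
      set W : R := s * u' * e₁ + s * v' * e₂ + t * u' * e₃ + t * v' * e₄ with hW
      have hcz : c * (u' * a + v' * b) = a * W := by
        rw [hW]
        linear_combination (-(u' * a + v' * b)) * hst + s * v' * he2a + t * v' * he3b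
      show u' * a + v' * b ∈ Ideal.span {p * a + q * b}
      rw [Ideal.mem_span_singleton']
      refine ⟨W, ?_⟩
      apply mul_left_cancel₀ hc0
      linear_combination (-W) * had - hcz
    · show Ideal.span {p * a + q * b} ≤ I
      rw [Ideal.span_le, Set.singleton_subset_iff]
      exact hdI
  · intro h a b hpair
    rcases hpair with h1 | h2
    · exact aux_case h a b h1
    · rw [Ideal.span_pair_comm]
      exact aux_case h b a h2
end

section
/- A Prüfer domain R is a PRINC domain if and only if R is a Bézout domain. -/
/-- A Prüfer domain: every nonzero finitely generated ideal is invertible. -/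
def IsPrufer (R : Type*) [CommRing R] [IsDomain R] : Prop :=
  ∀ I : Ideal R, I ≠ ⊥ → I.FG →
    IsUnit (I : FractionalIdeal (nonZeroDivisors R) (FractionRing R))

theorem stmt3 {R : Type*} [CommRing R] [IsDomain R] (hR : IsPrufer R) :
    IsPRINC R ↔ IsBezout R := by
  constructor
  · -- PRINC → Bezout
    intro hP
    rw [IsBezout.iff_span_pair_isPrincipal]
    intro a b
    by_cases ha : a = 0
    · subst ha
      rw [Ideal.span_insert, Ideal.span_singleton_eq_bot.mpr rfl, bot_sup_eq]
      exact ⟨⟨b, rfl⟩⟩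
    set K := FractionRing R
    set φ := algebraMap R K with hφ
    have hφinj : Function.Injective φ := IsFractionRing.injective R K
    have hIne : Ideal.span {a, b} ≠ ⊥ := by
      intro h
      exact ha (Ideal.span_singleton_eq_bot.mp (le_bot_iff.mp
        (le_trans (Ideal.span_mono (Set.singleton_subset_iff.mpr (by simp))) h.le)))
    obtain ⟨u, hu⟩ := hR (Ideal.span {a, b}) hIne
      (Submodule.fg_span ((Set.finite_singleton b).insert a))
    -- inverse fractional ideal
    set J : FractionalIdeal (nonZeroDivisors R) K := ↑u⁻¹ with hJ
    have hmul : (↑(Ideal.span {a, b}) : FractionalIdeal (nonZeroDivisors R) K) * J = 1 := by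
      rw [hJ, ← hu]; exact u.mul_inv
    have hcoe : (↑(Ideal.span {a, b}) : FractionalIdeal (nonZeroDivisors R) K)
        = FractionalIdeal.spanSingleton (nonZeroDivisors R) (φ a)
          + FractionalIdeal.spanSingleton (nonZeroDivisors R) (φ b) := by
      rw [Ideal.span_insert, FractionalIdeal.coeIdeal_sup,
        FractionalIdeal.coeIdeal_span_singleton, FractionalIdeal.coeIdeal_span_singleton]
    have hone : (1 : K) ∈ (FractionalIdeal.spanSingleton (nonZeroDivisors R) (φ a)) * J
        + (FractionalIdeal.spanSingleton (nonZeroDivisors R) (φ b)) * J := by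
      rw [← add_mul, ← hcoe, hmul]
      exact FractionalIdeal.one_mem_one _
    rw [← FractionalIdeal.mem_coe, FractionalIdeal.coe_add] at hone
    obtain ⟨p, hp, q, hq, hpq⟩ := Submodule.mem_sup.mp hone
    rw [FractionalIdeal.mem_coe] at hp hq
    obtain ⟨x, hxJ, rfl⟩ := FractionalIdeal.mem_singleton_mul.mp hp
    obtain ⟨y, hyJ, rfl⟩ := FractionalIdeal.mem_singleton_mul.mp hq
    -- products of generators with x, y lie in R
    have haI : φ a ∈ (↑(Ideal.span {a, b}) : FractionalIdeal (nonZeroDivisors R) K) :=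
      FractionalIdeal.mem_coeIdeal_of_mem _ (Ideal.subset_span (by simp))
    have hbI : φ b ∈ (↑(Ideal.span {a, b}) : FractionalIdeal (nonZeroDivisors R) K) :=
      FractionalIdeal.mem_coeIdeal_of_mem _ (Ideal.subset_span (by simp))
    have key : ∀ z ∈ (↑(Ideal.span {a, b}) : FractionalIdeal (nonZeroDivisors R) K),
        ∀ w ∈ J, ∃ r : R, φ r = z * w := by
      intro z hz w hw
      have : z * w ∈ (1 : FractionalIdeal (nonZeroDivisors R) K) := by
        rw [← hmul]; exact FractionalIdeal.mul_mem_mul hz hw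
      exact (FractionalIdeal.mem_one_iff _).mp this
    obtain ⟨e, he⟩ := key _ haI _ hxJ
    obtain ⟨f, hf⟩ := key _ hbI _ hyJ
    obtain ⟨g, hg⟩ := key _ haI _ hyJ
    obtain ⟨h, hh⟩ := key _ hbI _ hxJ
    have hef : e + f = 1 := by
      apply hφinj
      rw [map_add, he, hf, map_one, hpq]
    have hidem : IsIdemPair e g := by
      left
      have h1 : e * (1 - e) = g * h := by
        apply hφinj
        have : (1 : R) - e = f := by rw [← hef]; ring
        rw [this, map_mul, map_mul, he, hf, hg, hh]; ring
      rw [h1]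
      exact Ideal.mem_span_singleton.mpr ⟨h, rfl⟩
    obtain ⟨c, hc⟩ := hP e g hidem
    have hc' : Ideal.span {e, g} = Ideal.span {c} := hc
    -- the product identity : span{a,b} * span{e,g} = span{a}
    have hbe : b * e = a * h := by
      apply hφinj; rw [map_mul, map_mul, he, hh]; ring
    have hbg : b * g = a * f := by
      apply hφinj; rw [map_mul, map_mul, hg, hf]; ring
    have hprod : Ideal.span {a, b} * Ideal.span {e, g} = Ideal.span {a} := by
      rw [Ideal.span_insert a, Ideal.span_insert e, Ideal.sup_mul, Ideal.mul_sup, Ideal.mul_sup,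
        Ideal.span_singleton_mul_span_singleton, Ideal.span_singleton_mul_span_singleton,
        Ideal.span_singleton_mul_span_singleton, Ideal.span_singleton_mul_span_singleton]
      apply le_antisymm
      · simp only [sup_le_iff]
        refine ⟨⟨?_, ?_⟩, ?_, ?_⟩ <;> rw [Ideal.span_singleton_le_span_singleton]
        · exact ⟨e, rfl⟩
        · exact ⟨g, rfl⟩
        · rw [hbe]; exact ⟨h, rfl⟩
        · rw [hbg]; exact ⟨f, rfl⟩
      · have hsum : a = a * e + b * g := by rw [hbg, ← mul_add, hef, mul_one]
        rw [Ideal.span_le, Set.singleton_subset_iff]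
        have mem1 : a * e + b * g ∈
            (Ideal.span {a * e} ⊔ Ideal.span {a * g}) ⊔
              (Ideal.span {b * e} ⊔ Ideal.span {b * g}) :=
          add_mem (Ideal.mem_sup_left (Ideal.mem_sup_left (Ideal.mem_span_singleton_self _)))
            (Ideal.mem_sup_right (Ideal.mem_sup_right (Ideal.mem_span_singleton_self _)))
        rwa [← hsum] at mem1
    rw [hc'] at hprod
    -- a = c * d with d ∈ span {a, b}
    have hamem : a ∈ Ideal.span ({c} : Set R) * Ideal.span {a, b} := by
      rw [mul_comm, hprod]
      exact Ideal.subset_span rfl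
    obtain ⟨d, hd, hcd⟩ := Ideal.mem_span_singleton_mul.mp hamem
    have hcne : c ≠ 0 := by
      rintro rfl
      rw [← hcd, zero_mul] at ha
      exact ha rfl
    refine ⟨⟨d, le_antisymm ?_ ?_⟩⟩
    · intro t ht
      have : t * c ∈ Ideal.span {a, b} * Ideal.span ({c} : Set R) :=
        Ideal.mul_mem_mul ht (Ideal.subset_span rfl)
      rw [hprod, Ideal.mem_span_singleton] at this
      obtain ⟨r, hr⟩ := this
      rw [← hcd] at hr
      have : t = d * r := by
        apply mul_left_cancel₀ hcne
        rw [mul_comm c t, hr]; ring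
      rw [Ideal.submodule_span_eq, Ideal.mem_span_singleton]
      exact ⟨r, this⟩
    · rw [Ideal.submodule_span_eq, Ideal.span_le, Set.singleton_subset_iff]
      exact hd
  · -- Bezout → PRINC
    intro hB a b _
    exact IsBezout.span_pair_isPrincipal a b
end

section
/- Let D be a PRINC domain with field of fractions Q, let V be a valuation domain containing Q with maximal ideal 𝔐, and let R = D + 𝔐. Then R is a PRINC domain. -/
theorem aux_key {V : Type*} [CommRing V] [IsDomain V] [ValuationRing V]
    (D : Subring V) (hD : IsPRINC D)
    (hQ : ∀ d : V, d ∈ D → d ≠ 0 → IsUnit d)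
    (R : Subring V)
    (hR : ∀ x : V, x ∈ R ↔ ∃ d ∈ D, ∃ m ∈ IsLocalRing.maximalIdeal V, x = d + m)
    (a b : R) (h : a * (1 - a) ∈ Ideal.span {b}) :
    (Ideal.span {a, b} : Ideal R).IsPrincipal := by
  set M : Ideal V := IsLocalRing.maximalIdeal V with hM
  have memRofM : ∀ m : V, m ∈ M → m ∈ R := fun m hm =>
    (hR m).mpr ⟨0, zero_mem _, m, hm, by ring⟩
  have memRofD : ∀ d : V, d ∈ D → d ∈ R := fun d hd =>
    (hR d).mpr ⟨d, hd, 0, zero_mem _, by ring⟩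
  have invMem : ∀ x w : V, x * w = 1 → (1 - x) ∈ M → w ∈ R := by
    intro x w hw hx
    have hw1 : w - 1 ∈ M := by
      have : w - 1 = (1 - x) * w := by linear_combination hw
      rw [this]; exact Ideal.mul_mem_right _ _ hx
    exact (hR w).mpr ⟨1, one_mem _, w - 1, hw1, by ring⟩
  obtain ⟨r, hr⟩ := Ideal.mem_span_singleton.mp h
  have E : (a : V) * (1 - a) = b * r := by exact_mod_cast congrArg (Subtype.val) hr
  by_cases hb : (b : V) ∈ M
  · by_cases ha : (a : V) ∈ M
    · -- a, b ∈ M : span {a,b} = span {b}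
      refine ⟨b, ?_⟩
      have hu : IsUnit (1 - (a : V)) :=
        IsLocalRing.isUnit_one_sub_self_of_mem_nonunits _
          ((IsLocalRing.mem_maximalIdeal _).mp ha)
      obtain ⟨w, hw⟩ := hu.exists_right_inv
      have hwR : w ∈ R := invMem _ _ hw (by simpa using ha)
      have hab : (a : R) ∈ Ideal.span ({b} : Set R) := by
        rw [Ideal.mem_span_singleton]
        refine ⟨r * ⟨w, hwR⟩, ?_⟩
        apply Subtype.ext
        push_cast
        linear_combination w * E - ((a : V)) * hw
      refine le_antisymm (Ideal.span_le.mpr ?_) (Ideal.span_mono ?_)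
      · exact Set.insert_subset_iff.mpr
          ⟨hab, Set.singleton_subset_iff.mpr (Ideal.mem_span_singleton_self b)⟩
      · exact Set.singleton_subset_iff.mpr (by simp)
    · -- a ∉ M, b ∈ M : a is a unit of R
      have hprime : (IsLocalRing.maximalIdeal V).IsPrime := Ideal.IsMaximal.isPrime inferInstance
      have hm : (a : V) * (1 - a) ∈ M := by
        rw [E]; exact Ideal.mul_mem_right _ _ hb
      have h1a : (1 - (a : V)) ∈ M := (hprime.mem_or_mem hm).resolve_left ha
      have hu : IsUnit ((a : V)) := by
        have := IsLocalRing.isUnit_one_sub_self_of_mem_nonunits _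
          ((IsLocalRing.mem_maximalIdeal _).mp h1a)
        simpa using this
      obtain ⟨w, hw⟩ := hu.exists_right_inv
      have hwR : w ∈ R := invMem _ _ hw h1a
      have h1 : (1 : R) ∈ Ideal.span ({a, b} : Set R) := by
        rw [Ideal.mem_span_pair]
        refine ⟨⟨w, hwR⟩, 0, ?_⟩
        apply Subtype.ext
        push_cast
        linear_combination hw
      have htop : Ideal.span ({a, b} : Set R) = ⊤ := (Ideal.eq_top_iff_one _).mpr h1
      exact ⟨1, by rw [htop]; exact (Ideal.span_singleton_one).symm⟩
  · -- b ∉ M : main case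
    have hub : IsUnit ((b : V)) := by
      by_contra hc
      exact hb ((IsLocalRing.mem_maximalIdeal _).mpr hc)
    obtain ⟨bi, hbi⟩ := hub.exists_right_inv
    obtain ⟨da, hda, ma, hma, hA⟩ := (hR a).mp a.2
    obtain ⟨db, hdb, mb, hmb, hB⟩ := (hR b).mp b.2
    obtain ⟨dr, hdr, mr, hmr, hRr⟩ := (hR r).mp r.2
    have hdbne : db ≠ 0 := by
      rintro rfl
      apply hb
      rw [hB, zero_add]; exact hmb
    have hDM : da * (1 - da) - db * dr ∈ M := by
      have key : da * (1 - da) - db * dr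
          = ma * (2 * (a : V) - 1 - ma) + (b : V) * mr + mb * (r - mr) := by
        linear_combination E - (1 - (a:V) + ma - da) * hA + ((r : V) - mr) * hB + db * hRr
      rw [key]
      exact Ideal.add_mem _ (Ideal.add_mem _ (Ideal.mul_mem_right _ _ hma)
        (Ideal.mul_mem_left _ _ hmr)) (Ideal.mul_mem_right _ _ hmb)
    have hDD : da * (1 - da) - db * dr ∈ D :=
      sub_mem (mul_mem hda (sub_mem (one_mem _) hda)) (mul_mem hdb hdr)
    have hEq : da * (1 - da) = db * dr := by
      by_contra hne
      have hne' : da * (1 - da) - db * dr ≠ 0 := sub_ne_zero.mpr hne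
      exact ((IsLocalRing.mem_maximalIdeal _).mp hDM) (hQ _ hDD hne')
    have hpair : (⟨da, hda⟩ : D) * (1 - ⟨da, hda⟩) ∈ Ideal.span ({(⟨db, hdb⟩ : D)} : Set D) := by
      rw [Ideal.mem_span_singleton]
      exact ⟨⟨dr, hdr⟩, by apply Subtype.ext; push_cast; exact hEq⟩
    obtain ⟨c, hc⟩ := hD ⟨da, hda⟩ ⟨db, hdb⟩ (Or.inl hpair)
    have hmemA : (⟨da, hda⟩ : D) ∈ Ideal.span ({(⟨da, hda⟩ : D), ⟨db, hdb⟩} : Set D) :=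
      Ideal.subset_span (by simp)
    have hmemB : (⟨db, hdb⟩ : D) ∈ Ideal.span ({(⟨da, hda⟩ : D), ⟨db, hdb⟩} : Set D) :=
      Ideal.subset_span (by simp)
    rw [hc] at hmemA hmemB
    obtain ⟨s, hs⟩ := Ideal.mem_span_singleton.mp hmemA
    obtain ⟨t, ht⟩ := Ideal.mem_span_singleton.mp hmemB
    have hmemC : c ∈ Ideal.span ({(⟨da, hda⟩ : D), ⟨db, hdb⟩} : Set D) := by
      rw [hc]; exact Ideal.mem_span_singleton_self c
    obtain ⟨x, y, hxy⟩ := Ideal.mem_span_pair.mp hmemC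
    have hsV : da = (c : V) * (s : V) := by
      have h' := Subtype.ext_iff.mp hs
      push_cast at h'
      simpa using h'
    have htV : db = (c : V) * (t : V) := by
      have h' := Subtype.ext_iff.mp ht
      push_cast at h'
      simpa using h'
    have hxyV : (x : V) * da + (y : V) * db = (c : V) := by
      have h' := Subtype.ext_iff.mp hxy
      push_cast at h'
      simpa using h'
    have hcne : (c : V) ≠ 0 := by
      intro hc0
      apply hdbne
      rw [htV, hc0, zero_mul]
    obtain ⟨ci, hci⟩ := (hQ (c : V) c.2 hcne).exists_right_inv
    refine ⟨⟨(c : V), memRofD _ c.2⟩, ?_⟩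
    have hag : (a : R) ∈ Ideal.span ({(⟨(c : V), memRofD _ c.2⟩ : R)} : Set R) := by
      rw [Ideal.mem_span_singleton]
      refine ⟨⟨(s : V) + ci * ma, (hR _).mpr ⟨s, s.2, ci * ma, Ideal.mul_mem_left _ _ hma, rfl⟩⟩, ?_⟩
      apply Subtype.ext
      push_cast
      linear_combination hA + hsV - ma * hci
    have hbg : (b : R) ∈ Ideal.span ({(⟨(c : V), memRofD _ c.2⟩ : R)} : Set R) := by
      rw [Ideal.mem_span_singleton]
      refine ⟨⟨(t : V) + ci * mb, (hR _).mpr ⟨t, t.2, ci * mb, Ideal.mul_mem_left _ _ hmb, rfl⟩⟩, ?_⟩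
      apply Subtype.ext
      push_cast
      linear_combination hB + htV - mb * hci
    have hgab : (⟨(c : V), memRofD _ c.2⟩ : R) ∈ Ideal.span ({a, b} : Set R) := by
      rw [Ideal.mem_span_pair]
      refine ⟨⟨(x : V), memRofD _ x.2⟩,
        ⟨(y : V) - bi * ((x : V) * ma + (y : V) * mb),
          (hR _).mpr ⟨y, y.2, -(bi * ((x : V) * ma + (y : V) * mb)),
            neg_mem (Ideal.mul_mem_left _ _ (Ideal.add_mem _ (Ideal.mul_mem_left _ _ hma)
              (Ideal.mul_mem_left _ _ hmb))), by ring⟩⟩, ?_⟩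
      apply Subtype.ext
      push_cast
      linear_combination (x : V) * hA + (y : V) * hB + hxyV
        - ((x : V) * ma + (y : V) * mb) * hbi
    refine le_antisymm (Ideal.span_le.mpr ?_) (Ideal.span_le.mpr ?_)
    · exact Set.insert_subset_iff.mpr ⟨hag, Set.singleton_subset_iff.mpr hbg⟩
    · exact Set.singleton_subset_iff.mpr hgab

theorem stmt4 {V : Type*} [CommRing V] [IsDomain V] [ValuationRing V]
    (D : Subring V) (hD : IsPRINC D)
    -- `V` contains the field of fractions of `D`:
    (hQ : ∀ d : V, d ∈ D → d ≠ 0 → IsUnit d)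
    -- `R = D + 𝔐`, where `𝔐` is the maximal ideal of `V`:
    (R : Subring V)
    (hR : ∀ x : V, x ∈ R ↔ ∃ d ∈ D, ∃ m ∈ IsLocalRing.maximalIdeal V, x = d + m) :
    IsPRINC R := by
  rintro a b (h | h)
  · exact aux_key D hD hQ R hR a b h
  · rw [Set.pair_comm]
    exact aux_key D hD hQ R hR b a h
end

section
/- If an integral domain R is the union of a directed family (join-semilattice under inclusion) of subrings each of which is a PRINC domain, then R is a PRINC domain. -/
lemma key_aux {R : Type*} [CommRing R] {ι : Type*}
    (S : ι → Subring R)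
    (hdir : ∀ i j : ι, ∃ k : ι, S i ≤ S k ∧ S j ≤ S k)
    (hprinc : ∀ i : ι, IsPRINC (S i))
    (hcov : ∀ x : R, ∃ i : ι, x ∈ S i)
    (a b : R) (h : a * (1 - a) ∈ Ideal.span {b}) :
    (Ideal.span {a, b}).IsPrincipal := by
  obtain ⟨c, hc⟩ := Ideal.mem_span_singleton.mp h
  obtain ⟨i, hi⟩ := hcov a
  obtain ⟨j, hj⟩ := hcov b
  obtain ⟨l, hl⟩ := hcov c
  obtain ⟨m, him, hjm⟩ := hdir i j
  obtain ⟨k, hmk, hlk⟩ := hdir m l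
  have ha : a ∈ S k := hmk (him hi)
  have hb : b ∈ S k := hmk (hjm hj)
  have hck : c ∈ S k := hlk hl
  have hpair : IsIdemPair (⟨a, ha⟩ : S k) ⟨b, hb⟩ := by
    left
    refine Ideal.mem_span_singleton.mpr ⟨⟨c, hck⟩, ?_⟩
    ext
    push_cast
    exact hc
  obtain ⟨d', hd'⟩ := hprinc k ⟨a, ha⟩ ⟨b, hb⟩ hpair
  refine ⟨(d' : R), ?_⟩
  have hd : (d' : R) ∈ Ideal.span {a, b} := by
    have hmem : d' ∈ Ideal.span ({⟨a, ha⟩, ⟨b, hb⟩} : Set (S k)) := by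
      rw [hd']; exact Submodule.mem_span_singleton_self d'
    obtain ⟨u, v, huv⟩ := Ideal.mem_span_pair.mp hmem
    refine Ideal.mem_span_pair.mpr ⟨u, v, ?_⟩
    have := congrArg Subtype.val huv
    push_cast at this
    exact this
  have key : ∀ (x : R) (hx : x ∈ S k),
      (⟨x, hx⟩ : S k) ∈ Ideal.span ({⟨a, ha⟩, ⟨b, hb⟩} : Set (S k)) →
        x ∈ Submodule.span R {(d' : R)} := by
    intro x hx hxm
    rw [hd'] at hxm
    obtain ⟨t, ht⟩ := Submodule.mem_span_singleton.mp hxm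
    refine Submodule.mem_span_singleton.mpr ⟨(t : R), ?_⟩
    have := congrArg Subtype.val ht
    push_cast at this
    simpa [smul_eq_mul] using this
  apply le_antisymm
  · rw [Ideal.span_le]
    intro x hx
    rcases hx with rfl | hx
    · exact key _ ha (Ideal.subset_span (by simp))
    · rcases hx with rfl
      exact key _ hb (Ideal.subset_span (by simp))
  · exact (Submodule.span_singleton_le_iff_mem _ _).mpr hd

theorem stmt6 {R : Type*} [CommRing R] [IsDomain R] {ι : Type*}
    (S : ι → Subring R)
    (hdir : ∀ i j : ι, ∃ k : ι, S i ≤ S k ∧ S j ≤ S k)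
    (hprinc : ∀ i : ι, IsPRINC (S i))
    (hcov : ∀ x : R, ∃ i : ι, x ∈ S i) :
    IsPRINC R := by
  intro a b hab
  rcases hab with h | h
  · exact key_aux S hdir hprinc hcov a b h
  · rw [Set.pair_comm]
    exact key_aux S hdir hprinc hcov b a h
end

section
/- If the polynomial ring D[X] over an integral domain D is a PRINC domain, then D is a PRINC domain. -/
theorem stmt7 {D : Type*} [CommRing D] [IsDomain D]
    (h : IsPRINC (Polynomial D)) : IsPRINC D := by
  intro a b hab
  by_cases hz : a = 0 ∧ b = 0
  · refine ⟨0, ?_⟩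
    simp [hz.1, hz.2, Ideal.span_insert]
  -- transfer the idempotent pair to D[X]
  have hab' : IsIdemPair (Polynomial.C a) (Polynomial.C b) := by
    rcases hab with hd | hd <;> rw [Ideal.mem_span_singleton] at hd <;>
      [left; right] <;> rw [Ideal.mem_span_singleton]
    · obtain ⟨c, hc⟩ := hd
      exact ⟨Polynomial.C c, by
        rw [← Polynomial.C_1, ← Polynomial.C_sub, ← Polynomial.C_mul, ← Polynomial.C_mul, hc]⟩
    · obtain ⟨c, hc⟩ := hd
      exact ⟨Polynomial.C c, by
        rw [← Polynomial.C_1, ← Polynomial.C_sub, ← Polynomial.C_mul, ← Polynomial.C_mul, hc]⟩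
  obtain ⟨f, hf⟩ := h _ _ hab'
  rw [Ideal.submodule_span_eq] at hf
  have hCa : Polynomial.C a ∈ Ideal.span {f} := by
    rw [← hf]; exact Ideal.subset_span (by simp)
  have hCb : Polynomial.C b ∈ Ideal.span {f} := by
    rw [← hf]; exact Ideal.subset_span (by simp)
  rw [Ideal.mem_span_singleton] at hCa hCb
  -- f is a nonzero constant
  have hdeg : f.natDegree = 0 := by
    rcases not_and_or.mp hz with ha | hb
    · have := Polynomial.natDegree_le_of_dvd hCa (by simpa using ha)
      simpa using this
    · have := Polynomial.natDegree_le_of_dvd hCb (by simpa using hb)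
      simpa using this
  set c := f.coeff 0 with hc
  have hfc : f = Polynomial.C c := (Polynomial.eq_C_of_natDegree_eq_zero hdeg)
  have hca : c ∣ a := by
    obtain ⟨g, hg⟩ := hCa
    refine ⟨g.coeff 0, ?_⟩
    have := congrArg (fun p => Polynomial.coeff p 0) hg
    simpa [hfc, Polynomial.mul_coeff_zero] using this
  have hcb : c ∣ b := by
    obtain ⟨g, hg⟩ := hCb
    refine ⟨g.coeff 0, ?_⟩
    have := congrArg (fun p => Polynomial.coeff p 0) hg
    simpa [hfc, Polynomial.mul_coeff_zero] using this
  have hcmem : c ∈ Ideal.span {a, b} := by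
    have hfmem : f ∈ Ideal.span {Polynomial.C a, Polynomial.C b} := by
      rw [hf]; exact Ideal.subset_span (by simp)
    rw [Ideal.mem_span_pair] at hfmem ⊢
    obtain ⟨u, v, huv⟩ := hfmem
    refine ⟨u.coeff 0, v.coeff 0, ?_⟩
    have := congrArg (fun p => Polynomial.coeff p 0) huv
    simpa [hfc, Polynomial.mul_coeff_zero] using this
  have heq : Ideal.span {a, b} = Ideal.span {c} := by
    refine le_antisymm ?_ ?_
    · rw [Ideal.span_le]
      rintro x (rfl | rfl) <;> rw [SetLike.mem_coe, Ideal.mem_span_singleton]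
      · exact hca
      · simpa using hcb
    · rwa [Ideal.span_le, Set.singleton_subset_iff]
  exact ⟨c, by rw [heq, Ideal.submodule_span_eq]⟩
end

section
/- If the polynomial ring D[X] over an integral domain D is a PRINC domain, then D is seminormal. Precisely: if α is in the fraction field of D with α² ∈ D and α³ ∈ D but α ∉ D, then the ideal of D[X] generated by (1+α²X²)(1-αX)(1+αX) and α²(1+αX) is generated by an idempotent pair but is not principal. -/
open Polynomial

/-- If `α` lies in the fraction field of `D`, with `α² = a2 ∈ D` and `α³ = a3 ∈ D` but
`α ∉ D`, then the ideal of `D[X]` generated by `(1+α²X²)(1-αX)(1+αX) = (1+α²X²)(1-α²X²)`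
and `α²(1+αX) = α² + α³X` is generated by an idempotent pair but is not principal;
in particular `D[X]` PRINC forces `D` seminormal. -/
theorem stmt8 {D : Type*} [CommRing D] [IsDomain D]
    (α : FractionRing D) (a2 a3 : D)
    (h2 : algebraMap D (FractionRing D) a2 = α ^ 2)
    (h3 : algebraMap D (FractionRing D) a3 = α ^ 3)
    (hα : α ∉ (algebraMap D (FractionRing D)).range) :
    IsIdemPair
        ((1 + C a2 * X ^ 2) * ((1 : D[X]) - C a2 * X ^ 2))
        (C a2 + C a3 * X) ∧
      ¬ (Ideal.span {(1 + C a2 * X ^ 2) * ((1 : D[X]) - C a2 * X ^ 2),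
          C a2 + C a3 * X}).IsPrincipal := by
  have hinj : Function.Injective (algebraMap D (FractionRing D)) :=
    IsFractionRing.injective D (FractionRing D)
  set φ := algebraMap D (FractionRing D) with hφ
  have ha : a3 ^ 2 = a2 ^ 3 := by
    apply hinj
    rw [map_pow, map_pow, h2, h3]; ring
  have hC : (C a3 : D[X]) ^ 2 = (C a2) ^ 3 := by
    rw [← C_pow, ← C_pow, ha]
  have hne : α ≠ 0 := by
    intro h
    exact hα ⟨0, by simp [h]⟩
  constructor
  · left
    rw [Ideal.mem_span_singleton]
    exact ⟨X ^ 4 * (1 + C a2 * X ^ 2) * (C a2 - C a3 * X),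
      by linear_combination (X : D[X]) ^ 6 * (1 + C a2 * X ^ 2) * hC⟩
  · rintro ⟨p, hp⟩
    set f : D[X] := (1 + C a2 * X ^ 2) * ((1 : D[X]) - C a2 * X ^ 2) with hf
    set g : D[X] := C a2 + C a3 * X with hg
    have hfI : f ∈ Ideal.span {f, g} := Ideal.subset_span (by simp)
    have hgI : g ∈ Ideal.span {f, g} := Ideal.subset_span (by simp)
    rw [hp] at hfI hgI
    obtain ⟨q, hq⟩ := Ideal.mem_span_singleton.mp hfI
    obtain ⟨r, hr⟩ := Ideal.mem_span_singleton.mp hgI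
    have hpI : p ∈ Ideal.span ({f, g} : Set D[X]) := by
      rw [hp]; exact Ideal.mem_span_singleton_self p
    obtain ⟨u, v, huv⟩ := Ideal.mem_span_pair.mp hpI
    -- evaluate at β = -α⁻¹
    set β : FractionRing D := -α⁻¹ with hβ
    have evf : eval₂ φ β f = 0 := by
      simp only [hf, eval₂_mul, eval₂_add, eval₂_sub, eval₂_one, eval₂_C, eval₂_X, eval₂_pow,
        h2, hβ]
      field_simp
      ring
    have evg : eval₂ φ β g = 0 := by
      simp only [hg, eval₂_mul, eval₂_add, eval₂_C, eval₂_X, h2, h3, hβ]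
      field_simp
      ring
    have evp : eval₂ φ β p = 0 := by
      have h := congrArg (eval₂ φ β) huv
      simp only [eval₂_add, eval₂_mul, evf, evg, mul_zero, zero_add, add_zero] at h
      exact h.symm
    -- p ≠ 0
    have hf0 : f ≠ 0 := fun h => by
      have : f.eval 0 = 1 := by simp [hf]
      rw [h] at this; simp at this
    have hp0 : p ≠ 0 := fun h => hf0 (by rw [hq, h, zero_mul])
    -- degree of p.map φ
    set P : (FractionRing D)[X] := p.map φ with hP
    have hP0 : P ≠ 0 := by
      simpa [hP, Polynomial.map_eq_zero_iff hinj] using hp0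
    have hGdvd : P ∣ g.map φ := Polynomial.map_dvd _ ⟨r, hr⟩
    have hG0 : g.map φ ≠ 0 := fun h => by
      have := congrArg (Polynomial.eval 0) h
      simp [hg, h2] at this
      exact hne this
    have hgdeg : (g.map φ).degree ≤ 1 := by
      refine le_trans (Polynomial.degree_map_le) ?_
      rw [hg]
      compute_degree
    have hPdeg : P.degree ≤ 1 := (Polynomial.degree_le_of_dvd hGdvd hG0).trans hgdeg
    have hPform := Polynomial.eq_X_add_C_of_degree_le_one hPdeg
    -- coefficients
    have hc0 : P.coeff 0 = φ (p.coeff 0) := by simp [hP]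
    have hc1 : P.coeff 1 = φ (p.coeff 1) := by simp [hP]
    have evP : P.eval β = 0 := by rw [hP, Polynomial.eval_map, evp]
    rw [hPform] at evP
    simp only [Polynomial.eval_add, Polynomial.eval_mul, Polynomial.eval_C, Polynomial.eval_X,
      hc0, hc1, hβ] at evP
    -- from evP : φ (p.coeff 1) * (-α⁻¹) + φ (p.coeff 0) = 0, get φ (coeff 0) * α = φ (coeff 1)
    have key : φ (p.coeff 0) * α = φ (p.coeff 1) := by
      field_simp at evP
      linear_combination evP
    -- constant coefficient of f = p * q
    have hconst : (1 : D) = p.coeff 0 * q.coeff 0 := by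
      have h := congrArg (fun s : D[X] => s.coeff 0) hq
      simp only [Polynomial.mul_coeff_zero] at h
      rw [← h, hf]
      simp [Polynomial.mul_coeff_zero]
    -- conclude α ∈ range
    apply hα
    refine ⟨p.coeff 1 * q.coeff 0, ?_⟩
    rw [map_mul, ← key]
    calc φ (p.coeff 0) * α * φ (q.coeff 0)
        = α * φ (p.coeff 0 * q.coeff 0) := by rw [map_mul]; ring
      _ = α := by rw [← hconst, map_one, mul_one]
end

section
/- Let K be a field, D = K[X_i : i ≥ 1] the polynomial ring in countably many indeterminates, and J the ideal generated by the elements X_i − X_{i+1}(1 + X_{i+1}) for i ≥ 1. Then J is a prime ideal of the localization of D at the maximal ideal 𝔐 = (X_i : i ≥ 1); in particular, for each n, the image x_n of X_n in D/J is transcendental over K, so K[x_n] is isomorphic to a polynomial ring K[Z]. -/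
open MvPolynomial

namespace Stmt11Aux

variable {K : Type*} [Field K]

/-- iterates of `p(Y) = Y + Y^2`. -/
noncomputable def pIter (K : Type*) [Field K] : ℕ → Polynomial K
  | 0 => Polynomial.X
  | (k + 1) => pIter K k + (pIter K k) ^ 2

lemma natDegree_pIter (k : ℕ) : (pIter K k).natDegree = 2 ^ k := by
  induction k with
  | zero => simp [pIter]
  | succ k ih =>
    have h2 : ((pIter K k) ^ 2).natDegree = 2 ^ (k + 1) := by
      rw [Polynomial.natDegree_pow, ih]; ring
    have hlt : (pIter K k).natDegree < ((pIter K k) ^ 2).natDegree := by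
      rw [h2, ih, pow_succ]
      have : (1 : ℕ) ≤ 2 ^ k := Nat.one_le_two_pow
      omega
    rw [pIter, Polynomial.natDegree_add_eq_right_of_natDegree_lt hlt, h2]

lemma pIter_comp (k : ℕ) : (pIter K k).comp (pIter K 1) = pIter K (k + 1) := by
  induction k with
  | zero => simp [pIter]
  | succ k ih =>
    show (pIter K k + (pIter K k) ^ 2).comp (pIter K 1) = _
    rw [Polynomial.add_comp, Polynomial.pow_comp, ih]
    rfl

/-- the generators of `J`. -/
noncomputable def gen (K : Type*) [Field K] (i : ℕ) : MvPolynomial ℕ K :=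
  X i - X (i + 1) * (1 + X (i + 1))

/-- the ideal `J`. -/
noncomputable def Jgen (K : Type*) [Field K] : Ideal (MvPolynomial ℕ K) :=
  Ideal.span (Set.range (gen K))

lemma pIter_succ (k : ℕ) : pIter K (k + 1) = pIter K k + (pIter K k) ^ 2 := rfl

lemma sub_dvd_aeval_sub {A : Type*} [CommRing A] [Algebra K A] (a b : A) (f : Polynomial K) :
    a - b ∣ Polynomial.aeval a f - Polynomial.aeval b f := by
  rw [Polynomial.aeval_def, Polynomial.aeval_def, ← Polynomial.eval_map, ← Polynomial.eval_map]
  exact Polynomial.sub_dvd_eval_sub a b _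

lemma mem_of_dvd_mem {A : Type*} [CommRing A] {I : Ideal A} {d x : A}
    (hd : d ∈ I) (h : d ∣ x) : x ∈ I := by
  obtain ⟨c, rfl⟩ := h
  exact I.mul_mem_right c hd

lemma sub_mul_mem {A : Type*} [CommRing A] {I : Ideal A} {a a' b b' : A}
    (ha : a - a' ∈ I) (hb : b - b' ∈ I) : a * b - a' * b' ∈ I := by
  have : a * b - a' * b' = a * (b - b') + b' * (a - a') := by ring
  rw [this]
  exact I.add_mem (I.mul_mem_left _ hb) (I.mul_mem_left _ ha)

lemma gen_mem (i : ℕ) : gen K i ∈ Jgen K :=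
  Ideal.subset_span ⟨i, rfl⟩

lemma X_sub_pIter_mem (i k : ℕ) :
    (X i : MvPolynomial ℕ K) - Polynomial.aeval (X (i + k)) (pIter K k) ∈ Jgen K := by
  induction k with
  | zero => simp [pIter]
  | succ k ih =>
    have hcomp : Polynomial.aeval (X (i + (k + 1)) : MvPolynomial ℕ K) (pIter K (k + 1)) =
        Polynomial.aeval
          (Polynomial.aeval (X (i + (k + 1)) : MvPolynomial ℕ K) (pIter K 1)) (pIter K k) := by
      rw [← pIter_comp, Polynomial.aeval_comp]
    set c : MvPolynomial ℕ K := Polynomial.aeval (X (i + (k + 1)) : MvPolynomial ℕ K) (pIter K 1)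
      with hc
    have hc' : c = X (i + k + 1) + X (i + k + 1) ^ 2 := by
      rw [hc, show pIter K 1 = Polynomial.X + Polynomial.X ^ 2 from rfl, map_add, map_pow,
        Polynomial.aeval_X, show i + (k + 1) = i + k + 1 from rfl]
    have hXc : (X (i + k) : MvPolynomial ℕ K) - c ∈ Jgen K := by
      have : (X (i + k) : MvPolynomial ℕ K) - c = gen K (i + k) := by
        rw [hc', gen]; ring
      rw [this]; exact gen_mem _
    have h2 : Polynomial.aeval (X (i + k) : MvPolynomial ℕ K) (pIter K k) -
        Polynomial.aeval c (pIter K k) ∈ Jgen K :=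
      mem_of_dvd_mem hXc (sub_dvd_aeval_sub _ _ _)
    have := (Jgen K).add_mem ih h2
    rw [hcomp]
    convert this using 1
    ring

lemma raise (m k : ℕ) (q : Polynomial K) :
    Polynomial.aeval (X m : MvPolynomial ℕ K) q -
      Polynomial.aeval (X (m + k)) (q.comp (pIter K k)) ∈ Jgen K := by
  rw [Polynomial.aeval_comp]
  exact mem_of_dvd_mem (X_sub_pIter_mem m k) (sub_dvd_aeval_sub _ _ _)

/-- raising to a higher level `m'` with `m ≤ m'`. -/
lemma raise' {m m' : ℕ} (h : m ≤ m') (q : Polynomial K) :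
    Polynomial.aeval (X m : MvPolynomial ℕ K) q -
      Polynomial.aeval (X m') (q.comp (pIter K (m' - m))) ∈ Jgen K := by
  have := raise m (m' - m) q
  rwa [Nat.add_sub_cancel' h] at this

lemma reduce (a : MvPolynomial ℕ K) :
    ∃ (m : ℕ) (q : Polynomial K), a - Polynomial.aeval (X m) q ∈ Jgen K := by
  induction a using MvPolynomial.induction_on with
  | C c => exact ⟨0, Polynomial.C c, by simp⟩
  | add p r ihp ihr =>
    obtain ⟨m1, q1, h1⟩ := ihp
    obtain ⟨m2, q2, h2⟩ := ihr
    refine ⟨max m1 m2, q1.comp (pIter K (max m1 m2 - m1)) + q2.comp (pIter K (max m1 m2 - m2)), ?_⟩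
    have r1 := raise' (le_max_left m1 m2) q1
    have r2 := raise' (le_max_right m1 m2) q2
    have := (Jgen K).add_mem ((Jgen K).add_mem h1 h2) ((Jgen K).add_mem r1 r2)
    convert this using 1
    rw [map_add]
    ring
  | mul_X p i ih =>
    obtain ⟨m1, q1, h1⟩ := ih
    refine ⟨max m1 i, (q1.comp (pIter K (max m1 i - m1))) * pIter K (max m1 i - i), ?_⟩
    have r1 : p - Polynomial.aeval (X (max m1 i) : MvPolynomial ℕ K)
        (q1.comp (pIter K (max m1 i - m1))) ∈ Jgen K := by
      have := (Jgen K).add_mem h1 (raise' (le_max_left m1 i) q1)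
      convert this using 1
      ring
    have r2 : (X i : MvPolynomial ℕ K) -
        Polynomial.aeval (X (max m1 i)) (pIter K (max m1 i - i)) ∈ Jgen K := by
      have := X_sub_pIter_mem (K := K) i (max m1 i - i)
      rwa [Nat.add_sub_cancel' (le_max_right m1 i)] at this
    have := sub_mul_mem r1 r2
    rw [map_mul]
    exact this

lemma crux {m : ℕ} {q : Polynomial K}
    (h : Polynomial.aeval (X m : MvPolynomial ℕ K) q ∈ Jgen K) : q = 0 := by
  classical
  obtain ⟨t, hts, hmem⟩ := Submodule.mem_span_finite_of_mem_span h
  set g : MvPolynomial ℕ K → ℕ := fun a => if h : ∃ i, gen K i = a then h.choose else 0 with hg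
  set N : ℕ := max (m + 1) (t.sup g + 1) with hN
  have hmN : m ≤ N := le_trans (Nat.le_succ m) (le_max_left _ _)
  have htsub : (t : Set (MvPolynomial ℕ K)) ⊆ gen K '' Set.Iio N := by
    intro a ha
    obtain ⟨i, hi⟩ := hts ha
    have hex : ∃ i, gen K i = a := ⟨i, hi⟩
    refine ⟨g a, ?_, ?_⟩
    · have : g a ≤ t.sup g := Finset.le_sup ha
      have : g a < t.sup g + 1 := Nat.lt_succ_of_le this
      exact lt_of_lt_of_le this (le_max_right _ _)
    · simp only [hg, dif_pos hex]
      exact hex.choose_spec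
  have hmem' : Polynomial.aeval (X m : MvPolynomial ℕ K) q ∈
      Ideal.span (gen K '' Set.Iio N) :=
    Ideal.span_mono htsub hmem
  -- evaluation map killing the first N generators
  let v : ℕ → Polynomial K := fun i => if i ≤ N then pIter K (N - i) else 0
  let ev : MvPolynomial ℕ K →ₐ[K] Polynomial K := MvPolynomial.aeval v
  have hevX : ∀ j, j ≤ N → ev (X j) = pIter K (N - j) := by
    intro j hj
    rw [show ev (X j) = v j from MvPolynomial.aeval_X v j]
    exact if_pos hj
  have hker : Ideal.span (gen K '' Set.Iio N) ≤ RingHom.ker ev.toRingHom := by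
    rw [Ideal.span_le]
    rintro _ ⟨i, hi, rfl⟩
    have hi' : i < N := hi
    have h1 : i ≤ N := le_of_lt hi'
    have h2 : i + 1 ≤ N := hi'
    have hz : ev (gen K i) = 0 := by
      rw [gen, map_sub, map_mul, map_add, map_one, hevX i h1, hevX (i + 1) h2]
      have hNi : N - i = (N - (i + 1)) + 1 := by omega
      rw [hNi, pIter_succ]
      ring
    simpa [RingHom.mem_ker] using hz
  have h0 : ev (Polynomial.aeval (X m : MvPolynomial ℕ K) q) = 0 := hker hmem'
  have hcomp : ev (Polynomial.aeval (X m : MvPolynomial ℕ K) q) =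
      q.comp (pIter K (N - m)) := by
    rw [← Polynomial.aeval_algHom_apply, hevX m hmN, Polynomial.comp_eq_aeval]
  rw [hcomp] at h0
  rcases Polynomial.comp_eq_zero_iff.mp h0 with h | ⟨_, hC⟩
  · exact h
  · exfalso
    have := natDegree_pIter (K := K) (N - m)
    rw [hC] at this
    simp only [Polynomial.natDegree_C] at this
    have : (1 : ℕ) ≤ 2 ^ (N - m) := Nat.one_le_two_pow
    omega

lemma Jgen_prime : (Jgen K).IsPrime := by
  constructor
  · intro h
    have h1 : (1 : Polynomial K) = 0 := by
      apply crux (m := 0)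
      rw [h]
      exact Submodule.mem_top
    simp at h1
  · intro a b hab
    obtain ⟨m1, q1, h1⟩ := reduce a
    obtain ⟨m2, q2, h2⟩ := reduce b
    set m := max m1 m2 with hm
    set Q1 := q1.comp (pIter K (m - m1)) with hQ1
    set Q2 := q2.comp (pIter K (m - m2)) with hQ2
    have ha : a - Polynomial.aeval (X m : MvPolynomial ℕ K) Q1 ∈ Jgen K := by
      have := (Jgen K).add_mem h1 (raise' (le_max_left m1 m2) q1)
      convert this using 1; ring
    have hb : b - Polynomial.aeval (X m : MvPolynomial ℕ K) Q2 ∈ Jgen K := by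
      have := (Jgen K).add_mem h2 (raise' (le_max_right m1 m2) q2)
      convert this using 1; ring
    have hmul : Polynomial.aeval (X m : MvPolynomial ℕ K) (Q1 * Q2) ∈ Jgen K := by
      have hs := sub_mul_mem ha hb
      have := (Jgen K).sub_mem hab hs
      rw [map_mul]
      convert this using 1
      ring
    have := crux hmul
    rcases mul_eq_zero.mp this with h | h
    · left
      rw [h] at ha
      simpa using ha
    · right
      rw [h] at hb
      simpa using hb

end Stmt11Aux

/-- `D = K[X_i : i ≥ 1]` (indices shifted to `ℕ`), `J = (X_i - X_{i+1}(1+X_{i+1}) : i)`,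
`𝔐 = (X_i : i)`. Then `J·T` is prime in the localization `T = D_𝔐`; in particular every
`x_n = X_n mod J` is transcendental over `K`, so `K[x_n] ≅ K[Z]`. -/
theorem stmt11 {K : Type*} [Field K]
    (J M : Ideal (MvPolynomial ℕ K))
    (hJ : J = Ideal.span (Set.range fun i : ℕ => X i - X (i + 1) * (1 + X (i + 1))))
    (hM : M = Ideal.span (Set.range X))
    (hMp : M.IsPrime) :
    (J.map (algebraMap (MvPolynomial ℕ K)
        (Localization (M.primeCompl (hp := hMp))))).IsPrime ∧
    ∀ n : ℕ, Transcendental K (Ideal.Quotient.mk J (X n)) ∧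
      Nonempty ((Algebra.adjoin K {Ideal.Quotient.mk J (X n)}) ≃ₐ[K] Polynomial K) := by
  have hJ' : J = Stmt11Aux.Jgen K := by
    rw [hJ, Stmt11Aux.Jgen]
    rfl
  have hJprime : J.IsPrime := hJ' ▸ Stmt11Aux.Jgen_prime
  have hJM : J ≤ M := by
    rw [hJ, hM, Ideal.span_le]
    rintro _ ⟨i, rfl⟩
    refine Ideal.sub_mem _ (Ideal.subset_span ⟨i, rfl⟩) ?_
    exact Ideal.mul_mem_right _ _ (Ideal.subset_span ⟨i + 1, rfl⟩)
  constructor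
  · haveI := hMp
    apply IsLocalization.isPrime_of_isPrime_disjoint (M.primeCompl) _ J hJprime
    rw [Set.disjoint_left]
    intro x hx hxJ
    exact hx (hJM hxJ)
  · intro n
    have htr : Transcendental K (Ideal.Quotient.mk J (X n)) := by
      intro halg
      obtain ⟨q, hq0, hq⟩ := halg
      have : Ideal.Quotient.mk J (Polynomial.aeval (X n : MvPolynomial ℕ K) q) = 0 := by
        have h2 := (Polynomial.aeval_algHom_apply (Ideal.Quotient.mkₐ K J) (X n) q).symm
        simp only [Ideal.Quotient.mkₐ_eq_mk] at h2
        exact h2.trans hq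
      rw [Ideal.Quotient.eq_zero_iff_mem, hJ'] at this
      exact hq0 (Stmt11Aux.crux this)
    refine ⟨htr, ?_⟩
    have hinj : Function.Injective (Polynomial.aeval (Ideal.Quotient.mk J (X n)) :
        Polynomial K →ₐ[K] _) := transcendental_iff_injective.mp htr
    exact ⟨(Subalgebra.equivOfEq _ _
        (Algebra.adjoin_singleton_eq_range_aeval K (Ideal.Quotient.mk J (X n)))).trans
      (AlgEquiv.ofInjective _ hinj).symm⟩
end

section
/- Let R be an integral domain which is the union of an increasing chain of subrings R_n = D[x_n], each a polynomial ring over a domain D, where x_n = x_{n+1}(1 + x_{n+1}) for all n ≥ 1. Then for any n, the element x_1 factors as x_1 = x_m · ∏_{i=2}^{m} (1 + x_i) with all m factors pairwise comaximal in R, for every m ≥ 2. -/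
theorem stmt12 {R : Type*} [CommRing R] [IsDomain R]
    (x : ℕ → R) (hx : ∀ n, 1 ≤ n → x n = x (n + 1) * (1 + x (n + 1))) :
    ∀ m, 2 ≤ m →
      x 1 = x m * ∏ i ∈ Finset.Icc 2 m, (1 + x i) ∧
      (∀ i, 2 ≤ i → i ≤ m → Ideal.span {x m, 1 + x i} = ⊤) ∧
      (∀ i j, 2 ≤ i → i < j → j ≤ m → Ideal.span {1 + x i, 1 + x j} = ⊤) := by
  -- divisibility: x j ∣ x i for 1 ≤ i ≤ j
  have hdvd : ∀ i j, 1 ≤ i → i ≤ j → x j ∣ x i := by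
    intro i j hi hij
    induction j, hij using Nat.le_induction with
    | base => exact dvd_rfl
    | succ n hn ih =>
      exact dvd_trans ⟨1 + x (n + 1), hx n (hi.trans hn)⟩ ih
  -- stronger: for i < j, x j * (1 + x j) ∣ x i
  have hdvd' : ∀ i j, 1 ≤ i → i < j → (x j * (1 + x j)) ∣ x i := by
    intro i j hi hij
    obtain ⟨k, rfl⟩ := Nat.exists_eq_add_of_lt hij
    have hk : 1 ≤ i + k := le_trans hi (Nat.le_add_right _ _)
    have := hx (i + k) hk
    rw [← this]
    exact hdvd i (i + k) hi (Nat.le_add_right _ _)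
  -- factorization
  have hfac : ∀ m, 1 ≤ m → x 1 = x m * ∏ i ∈ Finset.Icc 2 m, (1 + x i) := by
    intro m hm
    induction m, hm using Nat.le_induction with
    | base => simp
    | succ n hn ih =>
      rw [ih, Finset.prod_Icc_succ_top (by omega : 2 ≤ n + 1)]
      rw [hx n hn]; ring
  intro m hm
  refine ⟨hfac m (by omega), ?_, ?_⟩
  · intro i h2 him
    rw [Ideal.eq_top_iff_one, Ideal.mem_span_pair]
    obtain ⟨c, hc⟩ := hdvd i m (by omega) him
    exact ⟨-c, 1, by rw [hc]; ring⟩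
  · intro i j h2 hij hjm
    rw [Ideal.eq_top_iff_one, Ideal.mem_span_pair]
    obtain ⟨c, hc⟩ := hdvd' i j (by omega) hij
    -- x i = x j * (1 + x j) * c, so 1 = (1 + x i) - x j (1+x j) c
    exact ⟨1, -(x j * c), by rw [mul_assoc] at hc; rw [hc] at *; ring⟩
end

section
/- Let R be a unique comaximal factorization domain (UCFD) and b a nonzero nonunit of R. Then all complete comaximal factorizations of b have the same number of factors; consequently, an integral domain R = ∪ R_n as in the chain construction with x_n = x_{n+1}(1+x_{n+1}) cannot be a UCFD, since x_1 admits complete comaximal factorizations of arbitrarily many factors. -/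
/-- `c, d` are comaximal. -/
def Comaximal {R : Type*} [CommRing R] (c d : R) : Prop :=
  Ideal.span {c, d} = ⊤

/-- A nonzero nonunit which is not a product of two comaximal nonunits. -/
def PseudoIrreducible {R : Type*} [CommRing R] (b : R) : Prop :=
  b ≠ 0 ∧ ¬ IsUnit b ∧ ∀ c d : R, ¬ IsUnit c → ¬ IsUnit d → Comaximal c d → b ≠ c * d

/-- `l` is a complete comaximal factorization of `b`. -/
def IsCompleteComaximalFactorization {R : Type*} [CommRing R] (b : R) (l : List R) : Prop :=
  b = l.prod ∧ (∀ p ∈ l, PseudoIrreducible p) ∧ l.Pairwise Comaximal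

/-- A unique comaximal factorization domain: every nonzero nonunit has a complete
comaximal factorization, unique up to order and units. -/
def IsUCFD (R : Type*) [CommRing R] : Prop :=
  (∀ b : R, b ≠ 0 → ¬ IsUnit b → ∃ l : List R, IsCompleteComaximalFactorization b l) ∧
  ∀ (b : R) (l₁ l₂ : List R), IsCompleteComaximalFactorization b l₁ →
    IsCompleteComaximalFactorization b l₂ →
    ∃ l₂' : List R, l₂.Perm l₂' ∧ List.Forall₂ Associated l₁ l₂'

section Aux
variable {R : Type*} [CommRing R]

lemma comaximal_iff {c d : R} : Comaximal c d ↔ ∃ u v : R, u * c + v * d = 1 := by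
  rw [Comaximal, Ideal.eq_top_iff_one, Ideal.mem_span_pair]

lemma comaximal_of_dvd {a b c d : R} (ha : a ∣ c) (hb : b ∣ d) (h : Comaximal c d) :
    Comaximal a b := by
  obtain ⟨c', rfl⟩ := ha
  obtain ⟨d', rfl⟩ := hb
  obtain ⟨u, v, huv⟩ := comaximal_iff.mp h
  exact comaximal_iff.mpr ⟨u * c', v * d', by linear_combination huv⟩

lemma comaximal_one (a : R) : Comaximal a 1 :=
  comaximal_iff.mpr ⟨0, 1, by ring⟩

lemma comaximal_self_one_add (a : R) : Comaximal a (1 + a) :=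
  comaximal_iff.mpr ⟨-1, 1, by ring⟩

lemma comaximal_mul {a c d : R} (h1 : Comaximal a c) (h2 : Comaximal a d) :
    Comaximal a (c * d) := by
  obtain ⟨u, v, huv⟩ := comaximal_iff.mp h1
  obtain ⟨u', v', huv'⟩ := comaximal_iff.mp h2
  refine comaximal_iff.mpr ⟨u * u' * a + u * v' * d + v * c * u', v * v', ?_⟩
  linear_combination (u' * a + v' * d) * huv + huv'

lemma comaximal_list_prod {a : R} {t : List R} (h : ∀ q ∈ t, Comaximal a q) :
    Comaximal a t.prod := by
  induction t with
  | nil => simpa using comaximal_one a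
  | cons q t ih =>
    rw [List.prod_cons]
    exact comaximal_mul (h q (by simp)) (ih fun q hq => h q (by simp [hq]))

lemma refine_factorization [IsDomain R] (h : IsUCFD R) :
    ∀ (l : List R) (b : R), b = l.prod → (∀ p ∈ l, p ≠ 0 ∧ ¬ IsUnit p) →
    l.Pairwise Comaximal →
    ∃ l' : List R, IsCompleteComaximalFactorization b l' ∧ l.length ≤ l'.length := by
  intro l
  induction l with
  | nil =>
    intro b hb _ _
    exact ⟨[], ⟨hb, by simp, by simp⟩, by simp⟩
  | cons a t ih =>
    intro b hb hne hpw
    obtain ⟨ha0, hau⟩ := hne a (by simp)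
    obtain ⟨la, hla⟩ := h.1 a ha0 hau
    obtain ⟨lt, hlt, hlen⟩ := ih t.prod rfl (fun p hp => hne p (by simp [hp]))
      (List.Pairwise.of_cons hpw)
    refine ⟨la ++ lt, ⟨?_, ?_, ?_⟩, ?_⟩
    · rw [List.prod_append, ← hla.1, ← hlt.1, hb, List.prod_cons]
    · intro p hp
      rcases List.mem_append.mp hp with hp | hp
      · exact hla.2.1 p hp
      · exact hlt.2.1 p hp
    · rw [List.pairwise_append]
      refine ⟨hla.2.2, hlt.2.2, ?_⟩
      intro p hp q hq
      have hpa : p ∣ a := hla.1 ▸ List.dvd_prod hp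
      have hqt : q ∣ t.prod := hlt.1 ▸ List.dvd_prod hq
      have hat : Comaximal a t.prod :=
        comaximal_list_prod (fun r hr => (List.pairwise_cons.mp hpw).1 r hr)
      exact comaximal_of_dvd hpa hqt hat
    · have hne' : la ≠ [] := by
        rintro rfl
        exact hau (hla.1 ▸ isUnit_one)
      rw [List.length_append, List.length_cons]
      have : 1 ≤ la.length := List.length_pos_iff.mpr hne'
      omega

lemma chain_dvd {x : ℕ → R} (hx : ∀ n, 1 ≤ n → x n = x (n + 1) * (1 + x (n + 1))) :
    ∀ n m, 1 ≤ m → m ≤ n → x n ∣ x m := by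
  intro n m hm hmn
  induction n, hmn using Nat.le_induction with
  | base => exact dvd_rfl
  | succ n hn ih =>
    exact dvd_trans (Dvd.intro (1 + x (n + 1)) (hx n (le_trans hm hn)).symm) ih

lemma chain_list {x : ℕ → R} (hx : ∀ n, 1 ≤ n → x n = x (n + 1) * (1 + x (n + 1))) :
    ∀ n, 1 ≤ n → ∃ l : List R, x 1 = (x n :: l).prod ∧ (x n :: l).length = n ∧
      (∀ p ∈ l, ∃ m, 2 ≤ m ∧ m ≤ n ∧ p = 1 + x m) ∧ (x n :: l).Pairwise Comaximal := by
  intro n hn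
  induction n, hn using Nat.le_induction with
  | base => exact ⟨[], by simp, rfl, by simp, by simp⟩
  | succ n hn ih =>
    obtain ⟨l, hprod, hlen, hmem, hpw⟩ := ih
    have hmem' : ∀ p ∈ (1 + x (n + 1)) :: l, ∃ m, 2 ≤ m ∧ m ≤ n + 1 ∧ p = 1 + x m := by
      intro p hp
      rcases List.mem_cons.mp hp with rfl | hp
      · exact ⟨n + 1, by omega, le_rfl, rfl⟩
      · obtain ⟨m, h2, hmn, rfl⟩ := hmem p hp
        exact ⟨m, h2, by omega, rfl⟩
    refine ⟨(1 + x (n + 1)) :: l, ?_, ?_, hmem', ?_⟩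
    · rw [hprod, List.prod_cons, List.prod_cons, List.prod_cons, ← mul_assoc, ← hx n hn]
    · simp only [List.length_cons] at hlen ⊢; omega
    · rw [List.pairwise_cons]
      constructor
      · intro q hq
        obtain ⟨m, h2, hmn1, rfl⟩ := hmem' q hq
        exact comaximal_of_dvd (chain_dvd hx (n + 1) m (by omega) hmn1) dvd_rfl
          (comaximal_self_one_add (x m))
      · rw [List.pairwise_cons]
        refine ⟨?_, hpw.of_cons⟩
        intro q hq
        obtain ⟨m, h2, hmn, rfl⟩ := hmem q hq
        have h1 : (1 + x (n + 1)) ∣ x m :=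
          dvd_trans (Dvd.intro_left (x (n + 1)) (hx n hn).symm)
            (chain_dvd hx n m (by omega) hmn)
        exact comaximal_of_dvd h1 dvd_rfl (comaximal_self_one_add (x m))

end Aux

theorem stmt13 {R : Type*} [CommRing R] [IsDomain R] :
    (IsUCFD R → ∀ (b : R), b ≠ 0 → ¬ IsUnit b →
      ∀ l₁ l₂ : List R, IsCompleteComaximalFactorization b l₁ →
        IsCompleteComaximalFactorization b l₂ → l₁.length = l₂.length) ∧
    (∀ x : ℕ → R, (∀ n, 1 ≤ n → x n = x (n + 1) * (1 + x (n + 1))) →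
      (∀ n, 1 ≤ n → ¬ IsUnit (x n)) → (∀ n, 2 ≤ n → ¬ IsUnit (1 + x n)) →
      x 1 ≠ 0 → ¬ IsUCFD R) := by
  have part1 : IsUCFD R → ∀ (b : R), b ≠ 0 → ¬ IsUnit b →
      ∀ l₁ l₂ : List R, IsCompleteComaximalFactorization b l₁ →
        IsCompleteComaximalFactorization b l₂ → l₁.length = l₂.length := by
    intro h b _ _ l₁ l₂ h1 h2
    obtain ⟨l₂', hperm, hfa⟩ := h.2 b l₁ l₂ h1 h2
    rw [hfa.length_eq, hperm.length_eq]
  refine ⟨part1, ?_⟩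
  intro x hx hxu hx1u hx10 h
  obtain ⟨l₀, hl₀⟩ := h.1 (x 1) hx10 (hxu 1 le_rfl)
  set n := l₀.length + 1 with hndef
  obtain ⟨l, hprod, hlen, hmem, hpw⟩ := chain_list hx n (by omega)
  have hne : ∀ p ∈ x n :: l, p ≠ 0 ∧ ¬ IsUnit p := by
    intro p hp
    constructor
    · rintro rfl
      exact hx10 (by rw [hprod, List.prod_eq_zero hp])
    · rcases List.mem_cons.mp hp with rfl | hp
      · exact hxu n (by omega)
      · obtain ⟨m, h2, _, rfl⟩ := hmem p hp
        exact hx1u m h2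
  obtain ⟨l', hl', hlen'⟩ := refine_factorization h (x n :: l) (x 1) hprod hne hpw
  have := part1 h (x 1) hx10 (hxu 1 le_rfl) l' l₀ hl' hl₀
  omega
end

section
/- Let K be an algebraically closed field of characteristic χ, and Γ a subgroup of ℚ divisible by a prime p ≠ χ. Then the group algebra R = K[X; Γ] contains no pseudo-irreducible elements: every nonzero nonunit of R is a product of two comaximal nonunits. -/
open Polynomial LaurentPolynomial

theorem aux_mul_apply {K : Type*} [Semiring K] {Γ : Type*} [AddCancelCommMonoid Γ]
    (f g : AddMonoidAlgebra K Γ) (a0 b0 : Γ)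
    (H : ∀ a ∈ f.coeff.support, ∀ b ∈ g.coeff.support, a + b = a0 + b0 → a = a0) :
    (f * g).coeff (a0 + b0) = f.coeff a0 * g.coeff b0 := by
  classical
  rw [AddMonoidAlgebra.coeff_mul, Finsupp.sum]
  have key : ∀ a ∈ f.coeff.support,
      (Finsupp.sum g.coeff fun a₂ b₂ => if a + a₂ = a0 + b0 then f.coeff a * b₂ else 0)
        = if a = a0 then f.coeff a0 * g.coeff b0 else 0 := by
    intro a ha
    by_cases hae : a = a0
    · subst hae
      rw [if_pos rfl, Finsupp.sum]
      have h2 : ∀ b ∈ g.coeff.support,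
          (if a + b = a + b0 then f.coeff a * g.coeff b else 0) = if b = b0 then f.coeff a * g.coeff b else 0 := by
        intro b _
        exact if_congr (add_right_inj a) rfl rfl
      rw [Finset.sum_congr rfl h2, Finset.sum_ite_eq' g.coeff.support b0 (fun b => f.coeff a * g.coeff b)]
      by_cases hb0 : b0 ∈ g.coeff.support
      · rw [if_pos hb0]
      · rw [if_neg hb0, Finsupp.notMem_support_iff.1 hb0, mul_zero]
    · rw [if_neg hae, Finsupp.sum]
      refine Finset.sum_eq_zero fun b hb => ?_
      rw [if_neg]
      exact fun hc => hae (H a ha b hb hc)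
  rw [Finset.sum_congr rfl key, Finset.sum_ite_eq' f.coeff.support a0 (fun _ => f.coeff a0 * g.coeff b0)]
  by_cases ha0 : a0 ∈ f.coeff.support
  · rw [if_pos ha0]
  · rw [if_neg ha0, Finsupp.notMem_support_iff.1 ha0, zero_mul]

theorem aux_isUnit_card {K : Type*} [Field K] {Γ : Type*} [AddCommGroup Γ] [LinearOrder Γ]
    [IsOrderedAddMonoid Γ]
    {f : AddMonoidAlgebra K Γ} (h : IsUnit f) : f.coeff.support.card = 1 := by
  classical
  obtain ⟨u, rfl⟩ := h
  have hfg : (u : AddMonoidAlgebra K Γ) * (↑u⁻¹ : AddMonoidAlgebra K Γ) = 1 := u.mul_inv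
  set f := (u : AddMonoidAlgebra K Γ) with hfdef
  set g := (↑u⁻¹ : AddMonoidAlgebra K Γ) with hgdef
  have hf : f ≠ 0 := by
    intro h0
    rw [h0, zero_mul] at hfg
    exact zero_ne_one hfg
  have hg : g ≠ 0 := by
    intro h0
    rw [h0, mul_zero] at hfg
    exact zero_ne_one hfg
  have hfs : f.coeff.support.Nonempty :=
    Finsupp.support_nonempty_iff.2 (mt AddMonoidAlgebra.coeff_eq_zero.1 hf)
  have hgs : g.coeff.support.Nonempty :=
    Finsupp.support_nonempty_iff.2 (mt AddMonoidAlgebra.coeff_eq_zero.1 hg)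
  set Mf := f.coeff.support.max' hfs with hMf
  set Mg := g.coeff.support.max' hgs with hMg
  set mf := f.coeff.support.min' hfs with hmf
  set mg := g.coeff.support.min' hgs with hmg
  have hone : ∀ x : Γ, (1 : AddMonoidAlgebra K Γ).coeff x ≠ 0 → x = 0 := by
    intro x hx
    rw [AddMonoidAlgebra.one_def, AddMonoidAlgebra.coeff_single, Finsupp.single_apply] at hx
    by_contra hne
    exact hx (if_neg (fun h => hne h.symm))
  have h1 : (f * g).coeff (Mf + Mg) = f.coeff Mf * g.coeff Mg := by
    refine aux_mul_apply f g Mf Mg fun a ha b hb heq => ?_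
    by_contra hne
    have h1 : a < Mf := lt_of_le_of_ne (Finset.le_max' _ a ha) hne
    have h2 : b ≤ Mg := Finset.le_max' _ b hb
    exact absurd heq (ne_of_lt (add_lt_add_of_lt_of_le h1 h2))
  have h2 : (f * g).coeff (mf + mg) = f.coeff mf * g.coeff mg := by
    refine aux_mul_apply f g mf mg fun a ha b hb heq => ?_
    by_contra hne
    have h1 : mf < a := lt_of_le_of_ne (Finset.min'_le _ a ha) (Ne.symm hne)
    have h2 : mg ≤ b := Finset.min'_le _ b hb
    exact absurd heq.symm (ne_of_lt (add_lt_add_of_lt_of_le h1 h2))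
  rw [hfg] at h1 h2
  have hMne : f.coeff Mf * g.coeff Mg ≠ 0 :=
    mul_ne_zero (Finsupp.mem_support_iff.1 (Finset.max'_mem _ hfs))
      (Finsupp.mem_support_iff.1 (Finset.max'_mem _ hgs))
  have hmne : f.coeff mf * g.coeff mg ≠ 0 :=
    mul_ne_zero (Finsupp.mem_support_iff.1 (Finset.min'_mem _ hfs))
      (Finsupp.mem_support_iff.1 (Finset.min'_mem _ hgs))
  have hM0 : Mf + Mg = 0 := hone _ (h1 ▸ hMne)
  have hm0 : mf + mg = 0 := hone _ (h2 ▸ hmne)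
  have hMfmf : Mf = mf := by
    have h3 : mf ≤ Mf := Finset.min'_le _ _ (Finset.max'_mem _ hfs)
    have h4 : mg ≤ Mg := Finset.min'_le _ _ (Finset.max'_mem _ hgs)
    have h5 : Mf + Mg ≤ mf + Mg := by
      rw [hM0, ← hm0]
      exact add_le_add_right h4 mf
    exact le_antisymm (le_of_add_le_add_right h5) h3
  have hsupp : f.coeff.support = {mf} := by
    apply Finset.Subset.antisymm
    · intro a ha
      rw [Finset.mem_singleton]
      exact le_antisymm (hMfmf ▸ Finset.le_max' _ a ha) (Finset.min'_le _ a ha)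
    · simpa using Finset.min'_mem _ hfs
  rw [hsupp, Finset.card_singleton]

theorem aux_exists_gen (S : Finset ℚ) :
    ∃ g : ℚ, g ∈ AddSubgroup.closure (S : Set ℚ) ∧ ∀ s ∈ S, ∃ n : ℤ, n • g = s := by
  classical
  induction S using Finset.induction_on with
  | empty => exact ⟨0, AddSubgroup.zero_mem _, fun s hs => absurd hs (Finset.notMem_empty s)⟩
  | @insert a S ha ih =>
    obtain ⟨g, hgmem, hg⟩ := ih
    set z1 : ℤ := a.num * g.den with hz1
    set z2 : ℤ := g.num * a.den with hz2
    set N : ℚ := (a.den : ℚ) * (g.den : ℚ) with hN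
    have hda : ((a.den : ℚ)) ≠ 0 := Nat.cast_ne_zero.2 a.den_nz
    have hdg : ((g.den : ℚ)) ≠ 0 := Nat.cast_ne_zero.2 g.den_nz
    have hNne : N ≠ 0 := mul_ne_zero hda hdg
    have haN : a = (z1 : ℚ) / N := by
      rw [hz1, hN]
      push_cast
      rw [mul_div_mul_right _ _ hdg]
      exact (Rat.num_div_den a).symm
    have hgN : g = (z2 : ℚ) / N := by
      rw [hz2, hN]
      push_cast
      rw [mul_comm (a.den : ℚ) (g.den : ℚ), mul_div_mul_right _ _ hda]
      exact (Rat.num_div_den g).symm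
    set d : ℤ := (Int.gcd z1 z2 : ℤ) with hd
    set g' : ℚ := (d : ℚ) / N with hg'
    have hbez : g' = (Int.gcdA z1 z2 : ℤ) • a + (Int.gcdB z1 z2 : ℤ) • g := by
      rw [hg', hd, Int.gcd_eq_gcd_ab z1 z2, haN, hgN]
      push_cast
      ring
    have hg'mem : g' ∈ AddSubgroup.closure ((insert a S : Finset ℚ) : Set ℚ) := by
      rw [hbez]
      apply AddSubgroup.add_mem
      · exact AddSubgroup.zsmul_mem _ (AddSubgroup.subset_closure (by simp)) _
      · refine AddSubgroup.zsmul_mem _ ?_ _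
        refine AddSubgroup.closure_mono ?_ hgmem
        intro x hx
        simp only [Finset.coe_insert, Set.mem_insert_iff]
        exact Or.inr hx
    refine ⟨g', hg'mem, ?_⟩
    have hkey : ∀ z : ℤ, d ∣ z → (z / d : ℤ) • g' = (z : ℚ) / N := by
      intro z hdvd
      have h1 : ((z / d : ℤ) : ℚ) * (d : ℚ) = (z : ℚ) := by
        exact_mod_cast Int.ediv_mul_cancel hdvd
      rw [zsmul_eq_mul, hg', ← mul_div_assoc, h1]
    have hga : ∃ n : ℤ, n • g' = a := by
      refine ⟨z1 / d, ?_⟩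
      rw [hkey z1 (by rw [hd]; exact Int.gcd_dvd_left _ _), ← haN]
    have hgg : ∃ n : ℤ, n • g' = g := by
      refine ⟨z2 / d, ?_⟩
      rw [hkey z2 (by rw [hd]; exact Int.gcd_dvd_right _ _), ← hgN]
    intro s hs
    rcases Finset.mem_insert.1 hs with rfl | hsS
    · exact hga
    · obtain ⟨n, hn⟩ := hg s hsS
      obtain ⟨m, hm⟩ := hgg
      exact ⟨n * m, by rw [mul_zsmul, hm, hn]⟩

theorem stmt14 {K : Type*} [Field K] [IsAlgClosed K]
    (G : AddSubgroup ℚ) (p : ℕ) (hp : p.Prime)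
    -- `p` is different from the characteristic of `K`:
    (hpK : (p : K) ≠ 0)
    -- `Γ` is `p`-divisible:
    (hdiv : ∀ g : G, ∃ h : G, g = p • h) :
    ∀ b : AddMonoidAlgebra K G, b ≠ 0 → ¬ IsUnit b →
      ∃ c d : AddMonoidAlgebra K G, ¬ IsUnit c ∧ ¬ IsUnit d ∧
        Ideal.span {c, d} = ⊤ ∧ b = c * d := by
  classical
  intro b hb0 hbu
  have hbne : b.coeff.support.Nonempty :=
    Finsupp.support_nonempty_iff.2 (mt AddMonoidAlgebra.coeff_eq_zero.1 hb0)
  have hcard : 2 ≤ b.coeff.support.card := by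
    by_contra hlt
    push_neg at hlt
    have h1 : b.coeff.support.card = 1 := le_antisymm (by omega) (Finset.card_pos.2 hbne)
    obtain ⟨a, hane, hform⟩ := Finsupp.card_support_eq_one.1 h1
    apply hbu
    set k := b.coeff a with hk
    rw [← AddMonoidAlgebra.ofCoeff_coeff b, hform]
    show IsUnit (AddMonoidAlgebra.single a k)
    refine IsUnit.of_mul_eq_one (AddMonoidAlgebra.single (-a) k⁻¹) ?_
    rw [AddMonoidAlgebra.single_mul_single, add_neg_cancel, mul_inv_cancel₀ hane,
      ← AddMonoidAlgebra.one_def]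
  -- find a generator of the support
  set S : Finset ℚ := b.coeff.support.image (fun x : G => (x : ℚ)) with hS
  obtain ⟨g, hgmem, hgen⟩ := aux_exists_gen S
  have hSsub : (S : Set ℚ) ⊆ (G : Set ℚ) := by
    intro x hx
    simp only [hS, Finset.coe_image, Set.mem_image, Finset.mem_coe] at hx
    obtain ⟨y, _, rfl⟩ := hx
    exact y.2
  have hgG : g ∈ G := (AddSubgroup.closure_le G).2 hSsub hgmem
  obtain ⟨x, hx, y, hy, hxy⟩ := Finset.one_lt_card.1 hcard
  have hgne : g ≠ 0 := by
    rintro rfl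
    have hzero : ∀ s ∈ S, s = 0 := by
      intro s hs
      obtain ⟨n, hn⟩ := hgen s hs
      rw [smul_zero] at hn; exact hn.symm
    apply hxy
    have hx' : (x : ℚ) = 0 := hzero _ (Finset.mem_image_of_mem _ hx)
    have hy' : (y : ℚ) = 0 := hzero _ (Finset.mem_image_of_mem _ hy)
    exact Subtype.coe_injective (hx'.trans hy'.symm)
  obtain ⟨hG0, hhp⟩ := hdiv ⟨g, hgG⟩
  set h₀ : ℚ := (hG0 : ℚ) with hh₀
  have hgph : g = (p : ℤ) • h₀ := by
    have h2 := congrArg (fun z : G => (z : ℚ)) hhp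
    push_cast at h2
    simpa using h2
  have hh0ne : h₀ ≠ 0 := by
    intro h0
    rw [h0, smul_zero] at hgph; exact hgne hgph
  set ι : ℤ →+ G := zmultiplesHom G hG0 with hι
  have hιapp : ∀ n : ℤ, ((ι n : G) : ℚ) = n • h₀ := by
    intro n
    rw [hι, zmultiplesHom_apply]
    push_cast
    rfl
  have hιinj : Function.Injective ι := by
    intro n' m' hnm
    have h2 := congrArg (fun z : G => (z : ℚ)) hnm
    simp only [hιapp] at h2
    exact smul_left_injective ℤ hh0ne h2
  have key : ∀ s : G, s ∈ b.coeff.support → ∃ n : ℤ, (p : ℤ) ∣ n ∧ ι n = s := by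
    intro s hs
    obtain ⟨m, hm⟩ := hgen (s : ℚ) (Finset.mem_image_of_mem _ hs)
    refine ⟨m * p, ⟨m, mul_comm _ _⟩, ?_⟩
    refine Subtype.coe_injective ?_
    show ((ι (m * (p : ℤ)) : G) : ℚ) = (s : ℚ)
    rw [hιapp, ← hm, hgph, smul_smul]
  set e : G → ℤ := fun s => if hs : s ∈ b.coeff.support then (key s hs).choose else 0 with he
  have he1 : ∀ s ∈ b.coeff.support, ι (e s) = s := by
    intro s hs
    simp only [he, dif_pos hs]
    exact (key s hs).choose_spec.2
  have he2 : ∀ s ∈ b.coeff.support, (p : ℤ) ∣ e s := by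
    intro s hs
    simp only [he, dif_pos hs]
    exact (key s hs).choose_spec.1
  set φ : AddMonoidAlgebra K ℤ →+* AddMonoidAlgebra K G :=
    AddMonoidAlgebra.mapDomainRingHom K ι with hφ
  have hφapp : ∀ z : AddMonoidAlgebra K ℤ, φ z = AddMonoidAlgebra.mapDomain ι z := fun _ => rfl
  set b' : AddMonoidAlgebra K ℤ := AddMonoidAlgebra.mapDomain e b with hb'
  have hφb' : φ b' = b := by
    rw [hφapp, hb']
    apply AddMonoidAlgebra.ext
    change Finsupp.mapDomain ι (Finsupp.mapDomain e b.coeff) = b.coeff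
    rw [← Finsupp.mapDomain_comp]
    have hcongr : Finsupp.mapDomain (⇑ι ∘ e) b.coeff = Finsupp.mapDomain id b.coeff :=
      Finsupp.mapDomain_congr (fun s hs => he1 s hs)
    rw [hcongr, Finsupp.mapDomain_id]
  have heinj : Set.InjOn e b.coeff.support := by
    intro s hs t ht hst
    rw [← he1 s hs, ← he1 t ht, hst]
  have hb'supp : b'.coeff.support = b.coeff.support.image e := Finsupp.mapDomain_support_of_injOn b.coeff heinj
  have hb'card : 2 ≤ b'.coeff.support.card := by
    rw [hb'supp, Finset.card_image_of_injOn heinj]; exact hcard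
  have hb'dvd : ∀ n' ∈ b'.coeff.support, (p : ℤ) ∣ n' := by
    intro n' hn
    rw [hb'supp] at hn
    obtain ⟨s, hs, rfl⟩ := Finset.mem_image.1 hn
    exact he2 s hs
  have hb'0 : b' ≠ 0 := fun h0 => hb0 (by rw [← hφb', h0, map_zero])
  -- pass to Laurent polynomials
  obtain ⟨n, f', hf'⟩ := LaurentPolynomial.exists_T_pow (b' : LaurentPolynomial K)
  have hb'eq : b' = Polynomial.toLaurent f' * LaurentPolynomial.T (-(n : ℤ)) := by
    rw [hf', mul_assoc, ← LaurentPolynomial.T_add, add_neg_cancel, LaurentPolynomial.T_zero,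
      mul_one]
  have hf'0 : f' ≠ 0 := by
    rintro rfl
    rw [map_zero, zero_mul] at hb'eq
    exact hb'0 hb'eq
  set k0 : ℕ := Polynomial.rootMultiplicity 0 f' with hk0
  obtain ⟨q, hqeq, hqnd⟩ := f'.exists_eq_pow_rootMultiplicity_mul_and_not_dvd hf'0 0
  rw [Polynomial.C_0, sub_zero] at hqeq hqnd
  rw [← hk0] at hqeq
  have hq0 : q.coeff 0 ≠ 0 := fun h0 => hqnd (Polynomial.X_dvd_iff.2 h0)
  have hq0' : q ≠ 0 := by
    intro h0
    apply hq0
    rw [h0, Polynomial.coeff_zero]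
  have hb'q : b' = Polynomial.toLaurent q * LaurentPolynomial.T ((k0 : ℤ) - n) := by
    rw [hb'eq, hqeq, map_mul, Polynomial.toLaurent_X_pow, sub_eq_add_neg,
      LaurentPolynomial.T_add]
    ring
  have hTsingle : (LaurentPolynomial.T ((k0 : ℤ) - n) : LaurentPolynomial K)
      = AddMonoidAlgebra.single ((k0 : ℤ) - n) 1 := rfl
  have hsupp_b' : b'.coeff.support
      = (Polynomial.toLaurent q).coeff.support.map (addRightEmbedding ((k0 : ℤ) - n)) := by
    rw [hb'q, hTsingle]
    exact AddMonoidAlgebra.support_coeff_mul_single _ 1 (by simp) _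
  have hqsupp_card : 2 ≤ q.support.card := by
    have h2 := hb'card
    rw [hsupp_b', Finset.card_map, toLaurent_support, Finset.card_map] at h2
    exact h2
  have hqdvd0 : ∀ j ∈ q.support, (p : ℤ) ∣ ((j : ℤ) + ((k0 : ℤ) - n)) := by
    intro j hj
    apply hb'dvd
    rw [hsupp_b', Finset.mem_map]
    refine ⟨(j : ℤ), ?_, rfl⟩
    rw [toLaurent_support, Finset.mem_map]
    exact ⟨j, hj, rfl⟩
  have h0mem : 0 ∈ q.support := Polynomial.mem_support_iff.2 hq0
  have hpk0n : (p : ℤ) ∣ ((k0 : ℤ) - n) := by simpa using hqdvd0 0 h0mem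
  have hqdvd : ∀ j ∈ q.support, p ∣ j := by
    intro j hj
    have h2 := (hqdvd0 j hj).sub hpk0n
    rw [add_sub_cancel_right] at h2
    exact_mod_cast h2
  -- a primitive p-th root of unity
  have hNZ : NeZero ((p : ℕ) : K) := ⟨hpK⟩
  obtain ⟨ζ, hζ⟩ := HasEnoughRootsOfUnity.exists_primitiveRoot K p
  have hζp : ζ ^ p = 1 := hζ.pow_eq_one
  have hζ1 : ζ ≠ 1 := hζ.ne_one hp.one_lt
  -- a root of q
  have hqdeg : q.degree ≠ 0 := by
    intro hdeg
    have h1 : q.natDegree = 0 := Polynomial.natDegree_eq_zero_iff_degree_le_zero.2 hdeg.le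
    have h2 : q.support ⊆ {0} := by
      intro j hj
      obtain ⟨a, ha⟩ := Polynomial.natDegree_eq_zero.1 h1
      rw [Finset.mem_singleton]
      have := Polynomial.mem_support_iff.1 hj
      rw [← ha, Polynomial.coeff_C] at this
      by_contra hne
      exact this (if_neg hne)
    have := Finset.card_le_card h2
    rw [Finset.card_singleton] at this
    omega
  obtain ⟨r1, hr1⟩ := IsAlgClosed.exists_root q hqdeg
  have hr1ne : r1 ≠ 0 := by
    rintro rfl
    exact hq0 (by rwa [Polynomial.coeff_zero_eq_eval_zero])
  have hevalζ : ∀ z : K, q.eval (ζ * z) = q.eval z := by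
    intro z
    rw [Polynomial.eval_eq_sum, Polynomial.eval_eq_sum, Polynomial.sum, Polynomial.sum]
    refine Finset.sum_congr rfl fun j hj => ?_
    obtain ⟨m, rfl⟩ := hqdvd j hj
    rw [mul_pow, pow_mul, hζp, one_pow, one_mul]
  set r2 : K := ζ * r1 with hr2
  have hr2root : q.IsRoot r2 := by
    rw [Polynomial.IsRoot, hr2, hevalζ]; exact hr1
  have hr12 : r2 ≠ r1 := by
    rw [hr2]
    intro hcontra
    exact hζ1 (mul_right_cancel₀ hr1ne (by rw [hcontra, one_mul]))
  -- factor q = c' * d'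
  set m : ℕ := Polynomial.rootMultiplicity r1 q with hm
  obtain ⟨d', hd'eq, hd'nd⟩ := q.exists_eq_pow_rootMultiplicity_mul_and_not_dvd hq0' r1
  rw [← hm] at hd'eq
  set c' : Polynomial K := (Polynomial.X - Polynomial.C r1) ^ m with hc'
  have hd'r1 : d'.eval r1 ≠ 0 := fun h0 => hd'nd (Polynomial.dvd_iff_isRoot.2 h0)
  have hmpos : 0 < m := by
    rw [hm]
    exact (Polynomial.rootMultiplicity_pos hq0').2 hr1
  have hd'r2 : d'.eval r2 = 0 := by
    have h2 := hr2root
    rw [Polynomial.IsRoot, hd'eq, Polynomial.eval_mul, Polynomial.eval_pow, Polynomial.eval_sub,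
      Polynomial.eval_X, Polynomial.eval_C] at h2
    rcases mul_eq_zero.1 h2 with h3 | h3
    · exact absurd (sub_eq_zero.1 (pow_eq_zero_iff hmpos.ne' |>.1 h3)) hr12
    · exact h3
  have hd'0 : d'.coeff 0 ≠ 0 := by
    intro h0
    apply hq0
    have hev : Polynomial.eval 0 d' = 0 := (Polynomial.coeff_zero_eq_eval_zero d').symm.trans h0
    rw [hd'eq, Polynomial.coeff_zero_eq_eval_zero, Polynomial.eval_mul, hev, mul_zero]
  have hc'0 : c'.coeff 0 ≠ 0 := by
    rw [hc', Polynomial.coeff_zero_eq_eval_zero, Polynomial.eval_pow, Polynomial.eval_sub,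
      Polynomial.eval_X, Polynomial.eval_C, zero_sub]
    exact pow_ne_zero _ (neg_ne_zero.2 hr1ne)
  have hd'deg : d'.natDegree ≠ 0 := by
    intro h0
    obtain ⟨a, ha⟩ := Polynomial.natDegree_eq_zero.1 h0
    rw [← ha, Polynomial.eval_C] at hd'r2 hd'r1
    exact hd'r1 (hd'r2 ▸ rfl)
  have hc'deg : c'.natDegree ≠ 0 := by
    rw [hc', Polynomial.natDegree_pow, Polynomial.natDegree_X_sub_C, mul_one]
    omega
  have two_le_card : ∀ w : Polynomial K, w.coeff 0 ≠ 0 → w.natDegree ≠ 0 →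
      2 ≤ w.support.card := by
    intro w h0 hdeg
    have hw0 : w ≠ 0 := fun hh => h0 (by rw [hh, Polynomial.coeff_zero])
    refine Finset.one_lt_card.2 ⟨0, Polynomial.mem_support_iff.2 h0, w.natDegree,
      Polynomial.natDegree_mem_support_of_nonzero hw0, fun hh => hdeg hh.symm⟩
  have hcop : IsCoprime c' d' := by
    rw [hc']
    exact ((Polynomial.irreducible_X_sub_C r1).coprime_pow_of_not_dvd m hd'nd).symm
  obtain ⟨A, B, hAB⟩ := hcop
  -- assemble everything
  set u : AddMonoidAlgebra K G := φ (LaurentPolynomial.T ((k0 : ℤ) - n)) with hu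
  have huunit : IsUnit u := (LaurentPolynomial.isUnit_T ((k0 : ℤ) - n)).map φ
  set c : AddMonoidAlgebra K G := φ (Polynomial.toLaurent c') * u with hc
  set d : AddMonoidAlgebra K G := φ (Polynomial.toLaurent d') with hd
  have hsupcard : ∀ w : Polynomial K,
      (φ (Polynomial.toLaurent w)).coeff.support.card = w.support.card := by
    intro w
    change (Finsupp.mapDomain ι (Polynomial.toLaurent w).coeff).support.card = _
    rw [Finsupp.mapDomain_support_of_injective hιinj,
      Finset.card_image_of_injective _ hιinj, toLaurent_support, Finset.card_map]
  have hcu : ¬ IsUnit c := by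
    intro hcunit
    rw [hc] at hcunit
    have h1 : IsUnit (φ (Polynomial.toLaurent c')) := isUnit_of_mul_isUnit_left hcunit
    have h2 := aux_isUnit_card h1
    rw [hsupcard] at h2
    have := two_le_card c' hc'0 hc'deg
    omega
  have hdu : ¬ IsUnit d := by
    intro hdunit
    have h2 := aux_isUnit_card hdunit
    rw [hd, hsupcard] at h2
    have := two_le_card d' hd'0 hd'deg
    omega
  have hqcd : q = c' * d' := by rw [hc', ← hd'eq]
  refine ⟨c, d, hcu, hdu, ?_, ?_⟩
  · rw [Ideal.eq_top_iff_one, Ideal.mem_span_pair]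
    set u' : AddMonoidAlgebra K G := φ (LaurentPolynomial.T ((n : ℤ) - k0)) with hu'
    have huu' : u' * u = 1 := by
      rw [hu, hu', ← map_mul, ← LaurentPolynomial.T_add]
      rw [show ((n : ℤ) - k0) + ((k0 : ℤ) - n) = 0 by ring, LaurentPolynomial.T_zero, map_one]
    refine ⟨φ (Polynomial.toLaurent A) * u', φ (Polynomial.toLaurent B), ?_⟩
    have hABφ : φ (Polynomial.toLaurent A) * φ (Polynomial.toLaurent c')
        + φ (Polynomial.toLaurent B) * φ (Polynomial.toLaurent d') = 1 := by
      have h9 : φ (Polynomial.toLaurent (A * c' + B * d')) = 1 := by rw [hAB, map_one, map_one]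
      rw [← h9]
      simp only [map_add, map_mul]
    calc φ (Polynomial.toLaurent A) * u' * c + φ (Polynomial.toLaurent B) * d
        = (φ (Polynomial.toLaurent A) * φ (Polynomial.toLaurent c')
            + φ (Polynomial.toLaurent B) * φ (Polynomial.toLaurent d')) * (u' * u)
          + φ (Polynomial.toLaurent B) * φ (Polynomial.toLaurent d') * (1 - u' * u) := by
          rw [hc, hd]; ring
      _ = 1 := by rw [huu', hABφ, one_mul, sub_self, mul_zero, add_zero]
  · rw [hc, hd, hu, ← hφb', hb'q, hqcd, map_mul, map_mul, map_mul]
    ring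
end

section
/- Let R be an integral domain and X a finitely generated torsion-free R-module. If the minimal number of generators of X equals the rank of X (the dimension of Q ⊗_R X over the fraction field Q), then X is a free R-module. -/
theorem stmt17 {R : Type*} [CommRing R] [IsDomain R]
    (M : Type*) [AddCommGroup M] [Module R M] [Module.Finite R M]
    -- `M` is torsion-free:
    [NoZeroSMulDivisors R M]
    (n : ℕ)
    -- `n` is the minimal number of generators of `M`:
    (hgen : ∃ s : Finset M, s.card = n ∧ Submodule.span R (s : Set M) = ⊤)
    (hmin : ∀ s : Finset M, Submodule.span R (s : Set M) = ⊤ → n ≤ s.card)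
    -- `n` equals the rank of `M`, i.e. `dim_Q (Q ⊗[R] M)`:
    (hrank : Module.finrank (FractionRing R) (TensorProduct R (FractionRing R) M) = n) :
    Module.Free R M := by
  classical
  obtain ⟨s, hcard, hspan⟩ := hgen
  set Q := FractionRing R
  let f : M →ₗ[R] TensorProduct R Q M := TensorProduct.mk R Q M 1
  have hbc : IsBaseChange Q f := TensorProduct.isBaseChange R M Q
  haveI hloc : IsLocalizedModule (nonZeroDivisors R) f :=
    (isLocalizedModule_iff_isBaseChange (nonZeroDivisors R) Q f).mpr hbc
  have hspanQ : Submodule.span Q (f '' (s : Set M)) = ⊤ :=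
    span_eq_top_of_isLocalizedModule Q (nonZeroDivisors R) f hspan
  -- the images of `s` are linearly independent over `Q`
  have hliQ : LinearIndependent Q (fun x : s => f x) := by
    apply linearIndependent_of_top_le_span_of_card_eq_finrank
    · rw [show Set.range (fun x : s => f x) = f '' (s : Set M) by
        ext; simp [Set.mem_image], hspanQ]
    · rw [Fintype.card_coe, hcard, hrank]
  -- hence over `R`
  have hliR : LinearIndependent R (fun x : s => f x) :=
    (LinearIndependent.iff_fractionRing R Q).mpr hliQ
  -- pull back along `f`
  have hli : LinearIndependent R (fun x : s => (x : M)) :=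
    LinearIndependent.of_comp f hliR
  have hspan' : ⊤ ≤ Submodule.span R (Set.range (fun x : s => (x : M))) := by
    rw [Subtype.range_coe_subtype, Finset.setOf_mem, hspan]
  exact Module.Free.of_basis (Module.Basis.mk hli hspan')
end

section
/- If an integral domain D is the union of a join-semilattice (directed family) of seminormal subdomains, then D is seminormal. -/
/-- A seminormal domain: if `α` lies in the fraction field and `α², α³ ∈ R`, then `α ∈ R`. -/
def Seminormal (R : Type*) [CommRing R] : Prop :=
  ∀ α : FractionRing R, α ^ 2 ∈ (algebraMap R (FractionRing R)).range →
    α ^ 3 ∈ (algebraMap R (FractionRing R)).range →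
    α ∈ (algebraMap R (FractionRing R)).range

theorem stmt19 {D : Type*} [CommRing D] [IsDomain D] {ι : Type*}
    (S : ι → Subring D)
    (hdir : ∀ i j : ι, ∃ k : ι, S i ≤ S k ∧ S j ≤ S k)
    (hsn : ∀ i : ι, Seminormal (S i))
    (hcov : ∀ x : D, ∃ i : ι, x ∈ S i) :
    Seminormal D := by
  intro α h2 h3
  obtain ⟨a, ha⟩ := h2
  obtain ⟨b, hb⟩ := h3
  have hinjD : Function.Injective (algebraMap D (FractionRing D)) :=
    IsFractionRing.injective D (FractionRing D)
  by_cases ha0 : a = 0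
  · have hz : α ^ 2 = 0 := by rw [← ha, ha0, map_zero]
    have hα : α = 0 := pow_eq_zero_iff (n := 2) (by norm_num) |>.mp hz
    exact ⟨0, by rw [map_zero, hα]⟩
  · obtain ⟨i1, hi1⟩ := hcov a
    obtain ⟨i2, hi2⟩ := hcov b
    obtain ⟨k, hk1, hk2⟩ := hdir i1 i2
    set a' : S k := ⟨a, hk1 hi1⟩ with ha'def
    set b' : S k := ⟨b, hk2 hi2⟩ with hb'def
    have hba : b ^ 2 = a ^ 3 := by
      apply hinjD
      rw [map_pow, map_pow, ha, hb]
      ring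
    have hba' : b' ^ 2 = a' ^ 3 := Subtype.ext (by push_cast; exact hba)
    have ha0' : a' ≠ 0 := fun h => ha0 (congrArg Subtype.val h)
    set K := FractionRing (S k) with hK
    set φ := algebraMap (S k) K with hφ
    have hinjK : Function.Injective φ := IsFractionRing.injective (S k) K
    have hA : φ a' ≠ 0 := fun h => ha0' (hinjK (by rw [h, map_zero]))
    have hA2 : φ (a' ^ 2) ≠ 0 := by rw [map_pow]; exact pow_ne_zero 2 hA
    have hA3 : φ (a' ^ 3) ≠ 0 := by rw [map_pow]; exact pow_ne_zero 3 hA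
    set β : K := φ b' / φ a' with hβ
    have hβ2 : β ^ 2 = φ a' := by
      rw [hβ, div_pow, ← map_pow, ← map_pow, hba',
        show a' ^ 3 = a' * a' ^ 2 by ring, map_mul, mul_div_assoc,
        div_self hA2, mul_one]
    have hβ3 : β ^ 3 = φ b' := by
      rw [hβ, div_pow, ← map_pow, ← map_pow,
        show b' ^ 3 = b' * a' ^ 3 by rw [← hba']; ring, map_mul, mul_div_assoc,
        div_self hA3, mul_one]
    obtain ⟨c, hc⟩ := hsn k β ⟨a', hβ2.symm⟩ ⟨b', hβ3.symm⟩
    have hcab : c * a' = b' := by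
      apply hinjK
      rw [map_mul, hc, hβ, div_mul_cancel₀ _ hA]
    refine ⟨(c : D), ?_⟩
    have hcabD : (c : D) * a = b := congrArg Subtype.val hcab
    have hAD : algebraMap D (FractionRing D) a ≠ 0 :=
      fun h => ha0 (hinjD (by rw [h, map_zero]))
    apply mul_right_cancel₀ hAD
    rw [← map_mul, hcabD, hb, ha]
    ring
end
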